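/- arXiv:1408.1661 — 3 statements merged into one kernel-verified Lean document; each statement's English description precedes it below -/
import Mathlib

section
/- Let λ, μ ∈ ℝ with |λ| > |μ| > 1 and |λ| > √2, and let ψ : ℝ → ℝ be a C¹ function with M := sup|ψ'| < ∞. Given a > 0 and λ' with √2 ≤ λ' < |λ|, there exist a₀ ∈ (0,a) and δ₀ > 0 such that for every C¹ function φ : ℝ → ℝ with sup|φ| ≤ δ₀ and |μ − ψ(x)φ'(y)| ≤ |μ| for all x,y ∈ ℝ, the C¹ map F : ℝ² → ℝ² defined by F(x,y) = (λx, μy − ψ(x)φ(y)) satisfies: (i) DF_p maps cl(C^u_{a₀}) ∖ {(0,0)} into C^u_{a₀} for every p ∈ ℝ²; (ii) |DF_p(v)| ≥ λ'|v| for every v ∈ C^u_{a₀} and every p ∈ ℝ²; (iii) for every C¹ curve γ with γ'(t) ∈ C^u_{a₀} for all t, diam(F∘γ) ≥ λ'·diam(γ). -/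
noncomputable section

/-- The Euclidean plane `ℝ²`. -/
abbrev E2 : Type := EuclideanSpace ℝ (Fin 2)

/-- The unstable cone of aperture `a` in `ℝ²`: `{(v₁,v₂) : |v₂| < a|v₁|}`. -/
def coneUE (a : ℝ) : Set E2 := {v | |v 1| < a * |v 0|}

/-- The map `F(x,y) = (λx, μy − ψ(x)φ(y))`. -/
def Fmap (lam mu : ℝ) (ψ φ : ℝ → ℝ) : E2 → E2 :=
  fun v => WithLp.toLp 2 ![lam * v 0, mu * v 1 - ψ (v 0) * φ (v 1)]

namespace UCaux

def π0 : E2 →L[ℝ] ℝ := EuclideanSpace.proj 0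
def π1 : E2 →L[ℝ] ℝ := EuclideanSpace.proj 1

def L : (Fin 2 → ℝ) ≃L[ℝ] E2 := (EuclideanSpace.equiv (Fin 2) ℝ).symm

def Dmap (lam mu : ℝ) (ψ φ : ℝ → ℝ) (p : E2) : E2 →L[ℝ] E2 :=
  (L.toContinuousLinearMap).comp (ContinuousLinearMap.pi
    ![lam • π0,
      mu • π1 - (ψ (p 0) • (deriv φ (p 1) • π1) + φ (p 1) • (deriv ψ (p 0) • π0))])

lemma hπ0 (p : E2) : HasFDerivAt (fun v : E2 => v 0) π0 p := π0.hasFDerivAt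
lemma hπ1 (p : E2) : HasFDerivAt (fun v : E2 => v 1) π1 p := π1.hasFDerivAt

lemma fmap_hasFDerivAt (lam mu : ℝ) (ψ φ : ℝ → ℝ) (hψ : ContDiff ℝ 1 ψ)
    (hφ : ContDiff ℝ 1 φ) (p : E2) :
    HasFDerivAt (Fmap lam mu ψ φ) (Dmap lam mu ψ φ p) p := by
  have hG : HasFDerivAt (fun v : E2 => (![lam * v 0, mu * v 1 - ψ (v 0) * φ (v 1)] : Fin 2 → ℝ))
      (ContinuousLinearMap.pi
        ![lam • π0,
          mu • π1 - (ψ (p 0) • (deriv φ (p 1) • π1) + φ (p 1) • (deriv ψ (p 0) • π0))]) p := by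
    apply hasFDerivAt_pi.2
    intro i
    fin_cases i
    · simpa using (hπ0 p).const_mul lam
    · have hA : HasFDerivAt (fun v : E2 => ψ (v 0)) (deriv ψ (p 0) • π0) p :=
        ((hψ.differentiable one_ne_zero (p 0)).hasDerivAt).comp_hasFDerivAt p (hπ0 p)
      have hB : HasFDerivAt (fun v : E2 => φ (v 1)) (deriv φ (p 1) • π1) p :=
        ((hφ.differentiable one_ne_zero (p 1)).hasDerivAt).comp_hasFDerivAt p (hπ1 p)
      simpa [Pi.mul_def, Pi.sub_def] using (((hπ1 p).const_mul mu).sub (hA.mul hB))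
  exact (L.toContinuousLinearMap.hasFDerivAt).comp p hG

lemma fmap_fderiv_apply (lam mu : ℝ) (ψ φ : ℝ → ℝ) (hψ : ContDiff ℝ 1 ψ)
    (hφ : ContDiff ℝ 1 φ) (p w : E2) :
    fderiv ℝ (Fmap lam mu ψ φ) p w 0 = lam * w 0 ∧
    fderiv ℝ (Fmap lam mu ψ φ) p w 1 =
      (-(deriv ψ (p 0) * φ (p 1))) * w 0 + (mu - ψ (p 0) * deriv φ (p 1)) * w 1 := by
  rw [(fmap_hasFDerivAt lam mu ψ φ hψ hφ p).fderiv]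
  constructor
  · simp [Dmap, L, π0, π1]
  · simp [Dmap, L, π0, π1]
    ring

lemma norm_sq_e2 (w : E2) : ‖w‖ ^ 2 = (w 0) ^ 2 + (w 1) ^ 2 := by
  rw [EuclideanSpace.norm_eq, Real.sq_sqrt (by positivity)]
  simp [Fin.sum_univ_two, sq_abs]

lemma abs_coord_le (w : E2) (i : Fin 2) : |w i| ≤ ‖w‖ := by
  have h := norm_sq_e2 w
  have h2 : (w i) ^ 2 ≤ ‖w‖ ^ 2 := by
    fin_cases i
    · show (w 0) ^ 2 ≤ ‖w‖ ^ 2; nlinarith [sq_nonneg (w 1)]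
    · show (w 1) ^ 2 ≤ ‖w‖ ^ 2; nlinarith [sq_nonneg (w 0)]
  nlinarith [abs_nonneg (w i), norm_nonneg w, sq_abs (w i)]

end UCaux

open UCaux

set_option maxHeartbeats 1000000

/-- **Lemma 2.1.1 (existence of unstable cones, expanding case).** -/
theorem unstable_cones_expanding
    (lam mu : ℝ) (hlm : |lam| > |mu|) (hmu : |mu| > 1) (hsqrt : |lam| > Real.sqrt 2)
    (ψ : ℝ → ℝ) (hψ : ContDiff ℝ 1 ψ) (M : ℝ) (hM : ∀ x, |deriv ψ x| ≤ M)
    (a : ℝ) (ha : 0 < a) (lam' : ℝ) (hl1 : Real.sqrt 2 ≤ lam') (hl2 : lam' < |lam|) :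
    ∃ a₀ ∈ Set.Ioo (0:ℝ) a, ∃ δ₀ > (0:ℝ),
      ∀ φ : ℝ → ℝ, ContDiff ℝ 1 φ → (∀ y, |φ y| ≤ δ₀) →
        (∀ x y, |mu - ψ x * deriv φ y| ≤ |mu|) →
        -- (i) invariance of the closed cone minus the origin
        (∀ p : E2, ∀ w ∈ closure (coneUE a₀) \ {0},
            fderiv ℝ (Fmap lam mu ψ φ) p w ∈ coneUE a₀) ∧
        -- (ii) uniform expansion of cone vectors
        (∀ p : E2, ∀ w ∈ coneUE a₀,
            lam' * ‖w‖ ≤ ‖fderiv ℝ (Fmap lam mu ψ φ) p w‖) ∧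
        -- (iii) expansion of the diameter of cone-tangent curves
        (∀ (γ : ℝ → E2) (α β : ℝ), α ≤ β → ContDiffOn ℝ 1 γ (Set.Icc α β) →
            (∀ t ∈ Set.Icc α β, derivWithin γ (Set.Icc α β) t ∈ coneUE a₀) →
            lam' * Metric.diam (γ '' Set.Icc α β) ≤
              Metric.diam (Fmap lam mu ψ φ '' (γ '' Set.Icc α β))) := by
  have hl'pos : (0:ℝ) < lam' := lt_of_lt_of_le (Real.sqrt_pos.mpr (by norm_num)) hl1
  have hlampos : (0:ℝ) < |lam| := hl'pos.trans hl2
  have hM0 : (0:ℝ) ≤ M := (abs_nonneg _).trans (hM 0)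
  have hsq : lam' ^ 2 < lam ^ 2 := by nlinarith [sq_abs lam]
  have h1lt : (1:ℝ) < lam ^ 2 / lam' ^ 2 := (one_lt_div (by positivity)).mpr hsq
  set t : ℝ := Real.sqrt (lam ^ 2 / lam' ^ 2 - 1) with ht
  have htpos : 0 < t := Real.sqrt_pos.mpr (by linarith)
  set a₀ : ℝ := min (a / 2) t with ha₀
  have ha₀pos : 0 < a₀ := lt_min (by linarith) htpos
  have ha₀a : a₀ < a := lt_of_le_of_lt (min_le_left _ _) (by linarith)
  have ha₀t : a₀ ≤ t := min_le_right _ _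
  have ht2 : t ^ 2 = lam ^ 2 / lam' ^ 2 - 1 := Real.sq_sqrt (by linarith)
  have hexp : lam' ^ 2 * (1 + a₀ ^ 2) ≤ lam ^ 2 := by
    have h2 : a₀ ^ 2 ≤ lam ^ 2 / lam' ^ 2 - 1 := by nlinarith
    have h3 : lam' ^ 2 * (lam ^ 2 / lam' ^ 2) = lam ^ 2 := by field_simp
    nlinarith [sq_nonneg lam']
  set δ₀ : ℝ := a₀ * (|lam| - |mu|) / (2 * (M + 1)) with hδ
  have hlmMu : (0:ℝ) < |lam| - |mu| := by linarith
  have hδpos : 0 < δ₀ := div_pos (mul_pos ha₀pos hlmMu) (by linarith)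
  have hkey : M * δ₀ + |mu| * a₀ < a₀ * |lam| := by
    have h4 : δ₀ * (2 * (M + 1)) = a₀ * (|lam| - |mu|) := by
      rw [hδ]; field_simp
    nlinarith [hδpos]
  refine ⟨a₀, ⟨ha₀pos, ha₀a⟩, δ₀, hδpos, ?_⟩
  intro φ hφ hφle hφc
  have hD0 : ∀ p w : E2, fderiv ℝ (Fmap lam mu ψ φ) p w 0 = lam * w 0 :=
    fun p w => (fmap_fderiv_apply lam mu ψ φ hψ hφ p w).1
  have hD1 : ∀ p w : E2, fderiv ℝ (Fmap lam mu ψ φ) p w 1 =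
      (-(deriv ψ (p 0) * φ (p 1))) * w 0 + (mu - ψ (p 0) * deriv φ (p 1)) * w 1 :=
    fun p w => (fmap_fderiv_apply lam mu ψ φ hψ hφ p w).2
  have hbb : ∀ p : E2, |(-(deriv ψ (p 0) * φ (p 1)))| ≤ M * δ₀ := by
    intro p; rw [abs_neg, abs_mul]
    exact mul_le_mul (hM _) (hφle _) (abs_nonneg _) hM0
  have hcc : ∀ p : E2, |mu - ψ (p 0) * deriv φ (p 1)| ≤ |mu| := fun p => hφc _ _
  refine ⟨?_, ?_, ?_⟩
  -- (i)
  · intro p w hw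
    obtain ⟨hwcl, hw0⟩ := hw
    have hsub : closure (coneUE a₀) ⊆ {v : E2 | |v 1| ≤ a₀ * |v 0|} := by
      refine closure_minimal ?_
        (isClosed_le (π1.continuous.abs) (continuous_const.mul (π0.continuous.abs)))
      intro v hv
      show |v 1| ≤ a₀ * |v 0|
      exact le_of_lt (show |v 1| < a₀ * |v 0| from hv)
    have hwc : |w 1| ≤ a₀ * |w 0| := hsub hwcl
    have hw00 : w 0 ≠ 0 := by
      intro h
      apply hw0
      have h1 : w 1 = 0 := by
        rw [h, abs_zero, mul_zero] at hwc
        exact abs_nonpos_iff.mp hwc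
      show w ∈ ({0} : Set E2)
      rw [Set.mem_singleton_iff]
      ext i
      fin_cases i
      · exact h
      · exact h1
    have hwpos : (0:ℝ) < |w 0| := abs_pos.mpr hw00
    show |fderiv ℝ (Fmap lam mu ψ φ) p w 1| < a₀ * |fderiv ℝ (Fmap lam mu ψ φ) p w 0|
    rw [hD0, hD1, abs_mul]
    have h5 : |(-(deriv ψ (p 0) * φ (p 1))) * w 0 + (mu - ψ (p 0) * deriv φ (p 1)) * w 1|
        ≤ M * δ₀ * |w 0| + |mu| * |w 1| := by
      refine (abs_add_le _ _).trans ?_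
      rw [abs_mul, abs_mul]
      exact add_le_add (mul_le_mul_of_nonneg_right (hbb p) (abs_nonneg _))
        (mul_le_mul_of_nonneg_right (hcc p) (abs_nonneg _))
    have h6 := mul_lt_mul_of_pos_right hkey hwpos
    have h7 := mul_le_mul_of_nonneg_left hwc (abs_nonneg mu)
    nlinarith
  -- (ii)
  · intro p w hw
    have hw' : |w 1| < a₀ * |w 0| := hw
    have hnw : ‖w‖ ^ 2 ≤ (1 + a₀ ^ 2) * (w 0) ^ 2 := by
      have hns := norm_sq_e2 w
      nlinarith [sq_abs (w 0), sq_abs (w 1), abs_nonneg (w 0), abs_nonneg (w 1),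
        mul_self_le_mul_self (abs_nonneg (w 1)) hw'.le]
    have hcoord : |lam * w 0| ≤ ‖fderiv ℝ (Fmap lam mu ψ φ) p w‖ := by
      rw [← hD0 p w]; exact abs_coord_le _ 0
    have h6 : (lam' * ‖w‖) ^ 2 ≤ (|lam| * |w 0|) ^ 2 := by
      have e1 : lam' ^ 2 * ‖w‖ ^ 2 ≤ lam' ^ 2 * ((1 + a₀ ^ 2) * (w 0) ^ 2) :=
        mul_le_mul_of_nonneg_left hnw (sq_nonneg lam')
      have e2 : lam' ^ 2 * ((1 + a₀ ^ 2) * (w 0) ^ 2) ≤ lam ^ 2 * (w 0) ^ 2 := by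
        nlinarith [mul_le_mul_of_nonneg_right hexp (sq_nonneg (w 0))]
      calc (lam' * ‖w‖) ^ 2 = lam' ^ 2 * ‖w‖ ^ 2 := by ring
        _ ≤ lam' ^ 2 * ((1 + a₀ ^ 2) * (w 0) ^ 2) := e1
        _ ≤ lam ^ 2 * (w 0) ^ 2 := e2
        _ = (|lam| * |w 0|) ^ 2 := by rw [mul_pow, sq_abs, sq_abs]
    have h7 : lam' * ‖w‖ ≤ |lam| * |w 0| := by
      nlinarith [mul_nonneg hl'pos.le (norm_nonneg w),
        mul_nonneg (abs_nonneg lam) (abs_nonneg (w 0))]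
    calc lam' * ‖w‖ ≤ |lam| * |w 0| := h7
      _ = |lam * w 0| := (abs_mul lam (w 0)).symm
      _ ≤ _ := hcoord
  -- (iii)
  · intro γ α β hαβ hγ hcone
    rcases eq_or_lt_of_le hαβ with heq | hlt
    · subst heq
      simp [Set.Icc_self, Set.image_singleton, Metric.diam_singleton]
    · have hIu : UniqueDiffOn ℝ (Set.Icc α β) := uniqueDiffOn_Icc hlt
      have hγc : ContinuousOn γ (Set.Icc α β) := hγ.continuousOn
      have hγd : DifferentiableOn ℝ γ (Set.Icc α β) := hγ.differentiableOn one_ne_zero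
      have hdw : ∀ t ∈ Set.Icc α β,
          HasDerivWithinAt γ (derivWithin γ (Set.Icc α β) t) (Set.Icc α β) t :=
        fun t ht => (hγd t ht).hasDerivWithinAt
      have hg : ∀ t ∈ Set.Icc α β, HasDerivWithinAt (fun s => γ s 0)
          ((derivWithin γ (Set.Icc α β) t) 0) (Set.Icc α β) t :=
        fun t ht => π0.hasFDerivAt.comp_hasDerivWithinAt t (hdw t ht)
      have hh : ∀ t ∈ Set.Icc α β, HasDerivWithinAt (fun s => γ s 1)
          ((derivWithin γ (Set.Icc α β) t) 1) (Set.Icc α β) t :=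
        fun t ht => π1.hasFDerivAt.comp_hasDerivWithinAt t (hdw t ht)
      have hconeI : ∀ t ∈ Set.Icc α β,
          |(derivWithin γ (Set.Icc α β) t) 1| < a₀ * |(derivWithin γ (Set.Icc α β) t) 0| :=
        hcone
      have hG0 : ∀ t ∈ Set.Icc α β, (derivWithin γ (Set.Icc α β) t) 0 ≠ 0 := by
        intro t htI h
        have h1 := hconeI t htI
        rw [h, abs_zero, mul_zero] at h1
        exact (abs_nonneg _).not_gt h1
      have hGc : ContinuousOn (fun t => (derivWithin γ (Set.Icc α β) t) 0) (Set.Icc α β) :=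
        π0.continuous.comp_continuousOn (hγ.continuousOn_derivWithin hIu le_rfl)
      have hαI : α ∈ Set.Icc α β := ⟨le_rfl, hαβ⟩
      have hsign : (∀ s ∈ Set.Icc α β, 0 < (derivWithin γ (Set.Icc α β) s) 0) ∨
          (∀ s ∈ Set.Icc α β, (derivWithin γ (Set.Icc α β) s) 0 < 0) := by
        rcases (hG0 α hαI).lt_or_gt with hneg | hpos
        · right
          intro s hs
          by_contra hcon
          have hspos : 0 < (derivWithin γ (Set.Icc α β) s) 0 :=
            lt_of_le_of_ne (not_lt.mp hcon) (Ne.symm (hG0 s hs))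
          obtain ⟨u, hu, hu0⟩ :=
            isPreconnected_Icc.intermediate_value hαI hs hGc ⟨hneg.le, hspos.le⟩
          exact hG0 u hu hu0
        · left
          intro s hs
          by_contra hcon
          have hsneg : (derivWithin γ (Set.Icc α β) s) 0 < 0 :=
            lt_of_le_of_ne (not_lt.mp hcon) (hG0 s hs)
          obtain ⟨u, hu, hu0⟩ :=
            isPreconnected_Icc.intermediate_value hs hαI hGc ⟨hsneg.le, hpos.le⟩
          exact hG0 u hu hu0
      have hslope : ∀ s ∈ Set.Icc α β, ∀ u ∈ Set.Icc α β, s ≤ u →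
          |γ u 1 - γ s 1| ≤ a₀ * |γ u 0 - γ s 0| := by
        intro s hs u hu hsu
        rcases hsign with hpos | hneg
        · have hmu' : MonotoneOn (fun r => a₀ * γ r 0 - γ r 1) (Set.Icc α β) := by
            refine monotoneOn_of_hasDerivWithinAt_nonneg (convex_Icc α β)
              ((continuousOn_const.mul (π0.continuous.comp_continuousOn hγc)).sub
                (π1.continuous.comp_continuousOn hγc))
              (f' := fun x => a₀ * (derivWithin γ (Set.Icc α β) x) 0 -
                (derivWithin γ (Set.Icc α β) x) 1) ?_ ?_
            · intro x hx
              exact (((hg x (interior_subset hx)).const_mul a₀).sub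
                (hh x (interior_subset hx))).mono interior_subset
            · intro x hx
              have hx' := interior_subset hx
              have h1 := hconeI x hx'
              rw [abs_of_pos (hpos x hx')] at h1
              show (0:ℝ) ≤ a₀ * (derivWithin γ (Set.Icc α β) x) 0 -
                (derivWithin γ (Set.Icc α β) x) 1
              linarith [le_abs_self ((derivWithin γ (Set.Icc α β) x) 1)]
          have hmv : MonotoneOn (fun r => a₀ * γ r 0 + γ r 1) (Set.Icc α β) := by
            refine monotoneOn_of_hasDerivWithinAt_nonneg (convex_Icc α β)
              ((continuousOn_const.mul (π0.continuous.comp_continuousOn hγc)).add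
                (π1.continuous.comp_continuousOn hγc))
              (f' := fun x => a₀ * (derivWithin γ (Set.Icc α β) x) 0 +
                (derivWithin γ (Set.Icc α β) x) 1) ?_ ?_
            · intro x hx
              exact (((hg x (interior_subset hx)).const_mul a₀).add
                (hh x (interior_subset hx))).mono interior_subset
            · intro x hx
              have hx' := interior_subset hx
              have h1 := hconeI x hx'
              rw [abs_of_pos (hpos x hx')] at h1
              show (0:ℝ) ≤ a₀ * (derivWithin γ (Set.Icc α β) x) 0 +
                (derivWithin γ (Set.Icc α β) x) 1
              linarith [neg_abs_le ((derivWithin γ (Set.Icc α β) x) 1)]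
          have h1 : a₀ * γ s 0 - γ s 1 ≤ a₀ * γ u 0 - γ u 1 := hmu' hs hu hsu
          have h2 : a₀ * γ s 0 + γ s 1 ≤ a₀ * γ u 0 + γ u 1 := hmv hs hu hsu
          have h3 : |γ u 1 - γ s 1| ≤ a₀ * (γ u 0 - γ s 0) :=
            abs_le.mpr ⟨by linarith, by linarith⟩
          refine h3.trans ?_
          exact mul_le_mul_of_nonneg_left (le_abs_self _) ha₀pos.le
        · have hmu' : MonotoneOn (fun r => -(a₀ * γ r 0) - γ r 1) (Set.Icc α β) := by
            refine monotoneOn_of_hasDerivWithinAt_nonneg (convex_Icc α β)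
              (((continuousOn_const.mul (π0.continuous.comp_continuousOn hγc)).neg).sub
                (π1.continuous.comp_continuousOn hγc))
              (f' := fun x => -(a₀ * (derivWithin γ (Set.Icc α β) x) 0) -
                (derivWithin γ (Set.Icc α β) x) 1) ?_ ?_
            · intro x hx
              exact ((((hg x (interior_subset hx)).const_mul a₀).neg).sub
                (hh x (interior_subset hx))).mono interior_subset
            · intro x hx
              have hx' := interior_subset hx
              have h1 := hconeI x hx'
              rw [abs_of_neg (hneg x hx')] at h1
              show (0:ℝ) ≤ -(a₀ * (derivWithin γ (Set.Icc α β) x) 0) -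
                (derivWithin γ (Set.Icc α β) x) 1
              linarith [le_abs_self ((derivWithin γ (Set.Icc α β) x) 1)]
          have hmv : MonotoneOn (fun r => -(a₀ * γ r 0) + γ r 1) (Set.Icc α β) := by
            refine monotoneOn_of_hasDerivWithinAt_nonneg (convex_Icc α β)
              (((continuousOn_const.mul (π0.continuous.comp_continuousOn hγc)).neg).add
                (π1.continuous.comp_continuousOn hγc))
              (f' := fun x => -(a₀ * (derivWithin γ (Set.Icc α β) x) 0) +
                (derivWithin γ (Set.Icc α β) x) 1) ?_ ?_
            · intro x hx
              exact ((((hg x (interior_subset hx)).const_mul a₀).neg).add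
                (hh x (interior_subset hx))).mono interior_subset
            · intro x hx
              have hx' := interior_subset hx
              have h1 := hconeI x hx'
              rw [abs_of_neg (hneg x hx')] at h1
              show (0:ℝ) ≤ -(a₀ * (derivWithin γ (Set.Icc α β) x) 0) +
                (derivWithin γ (Set.Icc α β) x) 1
              linarith [neg_abs_le ((derivWithin γ (Set.Icc α β) x) 1)]
          have h1 : -(a₀ * γ s 0) - γ s 1 ≤ -(a₀ * γ u 0) - γ u 1 := hmu' hs hu hsu
          have h2 : -(a₀ * γ s 0) + γ s 1 ≤ -(a₀ * γ u 0) + γ u 1 := hmv hs hu hsu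
          have h3 : |γ u 1 - γ s 1| ≤ a₀ * (γ s 0 - γ u 0) :=
            abs_le.mpr ⟨by linarith, by linarith⟩
          refine h3.trans ?_
          have : γ s 0 - γ u 0 ≤ |γ u 0 - γ s 0| := by
            rw [abs_sub_comm]; exact le_abs_self _
          exact mul_le_mul_of_nonneg_left this ha₀pos.le
      have hslope' : ∀ s ∈ Set.Icc α β, ∀ u ∈ Set.Icc α β,
          |γ u 1 - γ s 1| ≤ a₀ * |γ u 0 - γ s 0| := by
        intro s hs u hu
        rcases le_total s u with h | h
        · exact hslope s hs u hu h
        · rw [abs_sub_comm, abs_sub_comm (γ u 0)]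
          exact hslope u hu s hs h
      have hdist : ∀ x ∈ γ '' Set.Icc α β, ∀ y ∈ γ '' Set.Icc α β,
          lam' * dist x y ≤ dist (Fmap lam mu ψ φ x) (Fmap lam mu ψ φ y) := by
        rintro x ⟨s, hs, rfl⟩ y ⟨u, hu, rfl⟩
        have hnsq : ‖γ s - γ u‖ ^ 2 = (γ s 0 - γ u 0) ^ 2 + (γ s 1 - γ u 1) ^ 2 := by
          rw [norm_sq_e2]; rfl
        have hΔ : |γ s 1 - γ u 1| ≤ a₀ * |γ s 0 - γ u 0| := hslope' u hu s hs
        have hF0 : (Fmap lam mu ψ φ (γ s) - Fmap lam mu ψ φ (γ u)) 0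
            = lam * (γ s 0 - γ u 0) := by
          show Fmap lam mu ψ φ (γ s) 0 - Fmap lam mu ψ φ (γ u) 0 = lam * (γ s 0 - γ u 0)
          simp [Fmap]
          ring
        have hcb : |lam * (γ s 0 - γ u 0)| ≤ ‖Fmap lam mu ψ φ (γ s) - Fmap lam mu ψ φ (γ u)‖ := by
          rw [← hF0]; exact abs_coord_le _ 0
        have e1 : ‖γ s - γ u‖ ^ 2 ≤ (1 + a₀ ^ 2) * (γ s 0 - γ u 0) ^ 2 := by
          nlinarith [sq_abs (γ s 0 - γ u 0), sq_abs (γ s 1 - γ u 1),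
            mul_self_le_mul_self (abs_nonneg (γ s 1 - γ u 1)) hΔ,
            abs_nonneg (γ s 0 - γ u 0)]
        have h8 : (lam' * ‖γ s - γ u‖) ^ 2 ≤ (|lam| * |γ s 0 - γ u 0|) ^ 2 := by
          have e2 : lam' ^ 2 * ((1 + a₀ ^ 2) * (γ s 0 - γ u 0) ^ 2)
              ≤ lam ^ 2 * (γ s 0 - γ u 0) ^ 2 := by
            nlinarith [mul_le_mul_of_nonneg_right hexp (sq_nonneg (γ s 0 - γ u 0))]
          calc (lam' * ‖γ s - γ u‖) ^ 2 = lam' ^ 2 * ‖γ s - γ u‖ ^ 2 := by ring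
            _ ≤ lam' ^ 2 * ((1 + a₀ ^ 2) * (γ s 0 - γ u 0) ^ 2) :=
                mul_le_mul_of_nonneg_left e1 (sq_nonneg lam')
            _ ≤ lam ^ 2 * (γ s 0 - γ u 0) ^ 2 := e2
            _ = (|lam| * |γ s 0 - γ u 0|) ^ 2 := by rw [mul_pow, sq_abs, sq_abs]
        have h9 : lam' * ‖γ s - γ u‖ ≤ |lam| * |γ s 0 - γ u 0| := by
          nlinarith [mul_nonneg hl'pos.le (norm_nonneg (γ s - γ u)),
            mul_nonneg (abs_nonneg lam) (abs_nonneg (γ s 0 - γ u 0))]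
        rw [dist_eq_norm, dist_eq_norm]
        calc lam' * ‖γ s - γ u‖ ≤ |lam| * |γ s 0 - γ u 0| := h9
          _ = |lam * (γ s 0 - γ u 0)| := (abs_mul _ _).symm
          _ ≤ _ := hcb
      have hcomp : IsCompact (γ '' Set.Icc α β) := isCompact_Icc.image_of_continuousOn hγc
      have hdiff : Differentiable ℝ (Fmap lam mu ψ φ) :=
        fun p => (fmap_hasFDerivAt lam mu ψ φ hψ hφ p).differentiableAt
      have hFc : Continuous (Fmap lam mu ψ φ) := hdiff.continuous
      have hcomp2 : IsCompact (Fmap lam mu ψ φ '' (γ '' Set.Icc α β)) := hcomp.image hFc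
      rw [mul_comm, ← le_div_iff₀ hl'pos]
      refine Metric.diam_le_of_forall_dist_le
        (div_nonneg Metric.diam_nonneg hl'pos.le) ?_
      intro x hx y hy
      rw [le_div_iff₀ hl'pos]
      calc dist x y * lam' = lam' * dist x y := mul_comm _ _
        _ ≤ dist (Fmap lam mu ψ φ x) (Fmap lam mu ψ φ y) := hdist x hx y hy
        _ ≤ Metric.diam (Fmap lam mu ψ φ '' (γ '' Set.Icc α β)) :=
            Metric.dist_le_diam_of_mem hcomp2.isBounded
              (Set.mem_image_of_mem _ hx) (Set.mem_image_of_mem _ hy)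


end
end

section
/- Let w ∈ ℝ² ∖ {0} be an irrational direction (i.e., ℝw ∩ (ℤ² ∖ {0}) = ∅) and let w₁ ∈ ℝ² be linearly independent from w; let w^⊥ and w₁^⊥ be nonzero vectors orthogonal to w and w₁ respectively. For a > 0 and p ∈ 𝕋², set C^u_{a,w}(p) = {v = v₁w + v₂w^⊥ ∈ T_p𝕋² : |v₂| < a|v₁|} and C^s_{a,w₁}(p) = {v = v₁w₁ + v₂w₁^⊥ ∈ T_p𝕋² : |v₂| < a|v₁|}, and fix a₀ > 0 small enough that C^u_{a₀,w}(p) ∩ C^s_{a₀,w₁}(p) = ∅. Then for every ε > 0 there exist a₁ ∈ (0,a₀) and M > 0 such that for every C¹ curve γ in 𝕋² with γ'(t) ∈ C^u_{a₁,w}(γ(t)) for all t and length ℓ(γ) ≥ M, and every C¹ curve β with β'(t) ∈ C^s_{a₁,w₁}(β(t)) for all t and length ℓ(β) ≥ ε, the images of γ and β intersect: γ ∩ β ≠ ∅. -/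
noncomputable section

/-- The flat torus `𝕋² = ℝ²/ℤ²` (as a product of two circles, with the quotient metric). -/
abbrev T2 : Type := AddCircle (1:ℝ) × AddCircle (1:ℝ)

/-- The canonical projection `ℝ² → 𝕋²`. -/
def pT : ℝ × ℝ → T2 := fun v => (↑v.1, ↑v.2)

/-- Euclidean norm on `ℝ²`. -/
def enorm2 (v : ℝ × ℝ) : ℝ := Real.sqrt (v.1^2 + v.2^2)

/-- Euclidean dot product on `ℝ²`. -/
def dot2 (v w : ℝ × ℝ) : ℝ := v.1 * w.1 + v.2 * w.2

/-- The cone of aperture `a` around the direction `w`, with transversal `wp`: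
vectors `v = v₁·w + v₂·wp` with `|v₂| < a|v₁|`. -/
def coneW (w wp : ℝ × ℝ) (a : ℝ) : Set (ℝ × ℝ) :=
  {v | ∃ v₁ v₂ : ℝ, v = v₁ • w + v₂ • wp ∧ |v₂| < a * |v₁|}

/-- The length `ℓ(γ) = ∫_α^β |γ'(t)| dt` of a `C¹` curve on `[α,β]` (Euclidean norm). -/
def curveLength (γ : ℝ → ℝ × ℝ) (α β : ℝ) : ℝ :=
  ∫ t in α..β, enorm2 (derivWithin γ (Set.Icc α β) t)

namespace LCCI

open Set

def cross2 (w v : ℝ × ℝ) : ℝ := w.1 * v.2 - w.2 * v.1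

lemma lagrange (w v : ℝ × ℝ) : (dot2 v w)^2 + (cross2 w v)^2 = dot2 w w * dot2 v v := by
  simp only [dot2, cross2]; ring

lemma dot2_self_nonneg (w : ℝ × ℝ) : 0 ≤ dot2 w w := by
  simp only [dot2]; nlinarith [mul_self_nonneg w.1, mul_self_nonneg w.2]

lemma dot2_self_pos {w : ℝ × ℝ} (hw : w ≠ 0) : 0 < dot2 w w := by
  rcases eq_or_ne w.1 0 with h1 | h1
  · have h2 : w.2 ≠ 0 := fun h2 => hw (Prod.ext h1 h2)
    simp only [dot2]
    nlinarith [mul_self_nonneg w.1, mul_self_pos.mpr h2]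
  · simp only [dot2]
    nlinarith [mul_self_pos.mpr h1, mul_self_nonneg w.2]

lemma coords_zero {w : ℝ × ℝ} (hw : w ≠ 0) {v : ℝ × ℝ} (h1 : dot2 v w = 0)
    (h2 : cross2 w v = 0) : v = 0 := by
  have hl := lagrange w v
  rw [h1, h2] at hl
  have hn := dot2_self_pos hw
  have hvv : dot2 v v = 0 := by nlinarith
  simp only [dot2] at hvv
  have h1 : v.1 = 0 := by nlinarith [mul_self_nonneg v.1, mul_self_nonneg v.2]
  have h2 : v.2 = 0 := by nlinarith [mul_self_nonneg v.1, mul_self_nonneg v.2]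
  exact Prod.ext h1 h2

lemma eq_of_coords {w : ℝ × ℝ} (hw : w ≠ 0) {u v : ℝ × ℝ} (h1 : dot2 u w = dot2 v w)
    (h2 : cross2 w u = cross2 w v) : u = v := by
  have h := coords_zero hw (v := u - v) ?_ ?_
  · exact sub_eq_zero.mp h
  · simp only [dot2, Prod.fst_sub, Prod.snd_sub] at *; linarith
  · simp only [cross2, Prod.fst_sub, Prod.snd_sub] at *; linarith

lemma recon1 (w v : ℝ × ℝ) : dot2 w w * v.1 = dot2 v w * w.1 - cross2 w v * w.2 := by
  simp only [dot2, cross2]; ring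

lemma recon2 (w v : ℝ × ℝ) : dot2 w w * v.2 = dot2 v w * w.2 + cross2 w v * w.1 := by
  simp only [dot2, cross2]; ring

lemma enorm2_eq (v : ℝ × ℝ) : enorm2 v = Real.sqrt (dot2 v v) := by
  simp only [enorm2, dot2]; ring_nf

lemma abs_dot2_le (w v : ℝ × ℝ) : |dot2 v w| ≤ Real.sqrt (dot2 w w) * enorm2 v := by
  rw [enorm2_eq]
  have h1 : |dot2 v w| = Real.sqrt ((dot2 v w)^2) := by rw [Real.sqrt_sq_eq_abs]
  rw [h1, ← Real.sqrt_mul (dot2_self_nonneg w)]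
  apply Real.sqrt_le_sqrt
  have := lagrange w v
  nlinarith [sq_nonneg (cross2 w v)]

lemma abs_cross2_le (w v : ℝ × ℝ) : |cross2 w v| ≤ Real.sqrt (dot2 w w) * enorm2 v := by
  rw [enorm2_eq]
  have h1 : |cross2 w v| = Real.sqrt ((cross2 w v)^2) := by rw [Real.sqrt_sq_eq_abs]
  rw [h1, ← Real.sqrt_mul (dot2_self_nonneg w)]
  apply Real.sqrt_le_sqrt
  have := lagrange w v
  nlinarith [sq_nonneg (dot2 v w)]

lemma enorm2_le_coords (w v : ℝ × ℝ) :
    Real.sqrt (dot2 w w) * enorm2 v ≤ |dot2 v w| + |cross2 w v| := by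
  rw [enorm2_eq, ← Real.sqrt_mul (dot2_self_nonneg w)]
  have h2 : |dot2 v w| + |cross2 w v| = Real.sqrt ((|dot2 v w| + |cross2 w v|)^2) := by
    rw [Real.sqrt_sq (by positivity)]
  rw [h2]
  apply Real.sqrt_le_sqrt
  have := lagrange w v
  nlinarith [abs_nonneg (dot2 v w), abs_nonneg (cross2 w v), sq_abs (dot2 v w), sq_abs (cross2 w v), mul_nonneg (abs_nonneg (dot2 v w)) (abs_nonneg (cross2 w v))]


section Cone

lemma cone_mem_iff {w wp : ℝ × ℝ} (hw : w ≠ 0) (hwp : wp ≠ 0) (horth : dot2 w wp = 0)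
    {a : ℝ} (v : ℝ × ℝ) :
    v ∈ coneW w wp a ↔ |cross2 w v| < (a * |cross2 w wp| / dot2 w w) * |dot2 v w| := by
  have hn2 := dot2_self_pos hw
  have hdwp : dot2 wp w = 0 := by simp only [dot2] at *; linarith
  have hκ : cross2 w wp ≠ 0 := by
    intro h
    exact hwp (coords_zero hw hdwp h)
  constructor
  · rintro ⟨v₁, v₂, rfl, hv⟩
    have hdot : dot2 (v₁ • w + v₂ • wp) w = v₁ * dot2 w w := by
      have hdwp' := hdwp
      simp only [dot2, Prod.fst_add, Prod.snd_add, Prod.smul_fst, Prod.smul_snd,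
        smul_eq_mul] at hdwp' ⊢
      linear_combination v₂ * hdwp'
    have hcross : cross2 w (v₁ • w + v₂ • wp) = v₂ * cross2 w wp := by
      simp only [cross2, dot2, Prod.fst_add, Prod.snd_add, Prod.smul_fst, Prod.smul_snd,
        smul_eq_mul]
      ring
    rw [hdot, hcross, abs_mul, abs_mul, abs_of_pos hn2]
    have hcp : 0 < |cross2 w wp| := abs_pos.mpr hκ
    have hrw : a * |cross2 w wp| / dot2 w w * (|v₁| * dot2 w w) = a * |v₁| * |cross2 w wp| := by
      field_simp
    rw [hrw]
    exact mul_lt_mul_of_pos_right hv hcp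
  · intro h
    refine ⟨dot2 v w / dot2 w w, cross2 w v / cross2 w wp, ?_, ?_⟩
    · have hwp1 : dot2 w w * wp.1 = - (cross2 w wp * w.2) := by
        have := recon1 w wp
        rw [hdwp] at this; linarith
      have hwp2 : dot2 w w * wp.2 = cross2 w wp * w.1 := by
        have := recon2 w wp
        rw [hdwp] at this; linarith
      have hv1 := recon1 w v
      have hv2 := recon2 w v
      apply Prod.ext
      · simp only [Prod.fst_add, Prod.smul_fst, smul_eq_mul]
        field_simp
        linear_combination cross2 w wp * hv1 - cross2 w v * hwp1
      · simp only [Prod.snd_add, Prod.smul_snd, smul_eq_mul]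
        field_simp
        linear_combination cross2 w wp * hv2 - cross2 w v * hwp2
    · rw [abs_div, abs_div, abs_of_pos hn2, div_lt_iff₀ (abs_pos.mpr hκ)]
      have h2 : a * (|dot2 v w| / dot2 w w) * |cross2 w wp| =
          (a * |cross2 w wp| / dot2 w w) * |dot2 v w| := by ring
      rw [h2]
      exact h

lemma cone_ne_zero {w1 w1p : ℝ × ℝ} (hw1 : w1 ≠ 0) (hw1p : w1p ≠ 0)
    (horth1 : dot2 w1 w1p = 0) {a : ℝ} {v : ℝ × ℝ} (hv : v ∈ coneW w1 w1p a) : v ≠ 0 := by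
  obtain ⟨v₁, v₂, rfl, hlt⟩ := hv
  intro h0
  have hv₁ : v₁ ≠ 0 := by
    intro h; rw [h, abs_zero, mul_zero] at hlt; exact (abs_nonneg v₂).not_gt hlt
  have hdot : v₁ * dot2 w1 w1p + v₂ * dot2 w1p w1p = 0 := by
    have h5 : dot2 (v₁ • w1 + v₂ • w1p) w1p = 0 := by rw [h0]; simp [dot2]
    simp only [dot2, Prod.fst_add, Prod.snd_add, Prod.smul_fst, Prod.smul_snd,
      smul_eq_mul] at h5 ⊢
    linear_combination h5
  rw [horth1] at hdot
  have hpp := dot2_self_pos hw1p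
  have hv₂ : v₂ = 0 := by
    have := hdot
    simp only [mul_zero, zero_add] at this
    exact (mul_eq_zero.mp this).resolve_right (ne_of_gt hpp)
  rw [hv₂] at h0 hlt
  simp only [zero_smul, add_zero, smul_eq_zero] at h0
  rcases h0 with h | h
  · exact hv₁ h
  · exact hw1 h

lemma cone_mono {w1 w1p : ℝ × ℝ} {a a' : ℝ} (h : a ≤ a') :
    coneW w1 w1p a ⊆ coneW w1 w1p a' := by
  rintro v ⟨v₁, v₂, rfl, hv⟩
  exact ⟨v₁, v₂, rfl, lt_of_lt_of_le hv (by nlinarith [abs_nonneg v₁])⟩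

end Cone

section Lattice

lemma irr_coords {w : ℝ × ℝ} (hw : w ≠ 0)
    (hirr : ∀ (c : ℝ) (m k : ℤ), c • w = ((m : ℝ), (k : ℝ)) → m = 0 ∧ k = 0)
    (m k : ℤ) (h : (m:ℝ) * w.1 + (k:ℝ) * w.2 = 0) : m = 0 ∧ k = 0 := by
  have hn2 := dot2_self_pos hw
  have hcz : cross2 w (((k:ℝ), (-(m:ℝ))) : ℝ × ℝ) = 0 := by
    simp only [cross2]; push_cast; linarith
  have h1 := recon1 w (((k:ℝ), (-(m:ℝ))) : ℝ × ℝ)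
  have h2 := recon2 w (((k:ℝ), (-(m:ℝ))) : ℝ × ℝ)
  rw [hcz] at h1 h2
  simp only [zero_mul, sub_zero, add_zero] at h1 h2
  have hc : (dot2 (((k:ℝ), (-(m:ℝ))) : ℝ × ℝ) w / dot2 w w) • w = (((k:ℤ):ℝ), ((-m : ℤ):ℝ)) := by
    apply Prod.ext
    · simp only [Prod.smul_fst, smul_eq_mul]
      push_cast
      field_simp
      linarith [h1]
    · simp only [Prod.smul_snd, smul_eq_mul]
      push_cast
      field_simp
      linarith [h2]
  obtain ⟨hk, hm⟩ := hirr _ _ _ hc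
  exact ⟨by omega, hk⟩

lemma exists_small_cross {w : ℝ × ℝ} (hw : w ≠ 0)
    (hirr : ∀ (c : ℝ) (m k : ℤ), c • w = ((m : ℝ), (k : ℝ)) → m = 0 ∧ k = 0)
    {δ : ℝ} (hδ : 0 < δ) :
    ∃ m k : ℤ, 0 < cross2 w ((m:ℝ),(k:ℝ)) ∧ cross2 w ((m:ℝ),(k:ℝ)) ≤ δ := by
  classical
  set H : AddSubgroup ℝ :=
    { carrier := {t | ∃ m k : ℤ, t = (m:ℝ) * w.1 + (k:ℝ) * w.2}
      zero_mem' := ⟨0, 0, by simp⟩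
      add_mem' := by
        rintro x y ⟨m1, k1, rfl⟩ ⟨m2, k2, rfl⟩
        exact ⟨m1 + m2, k1 + k2, by push_cast; ring⟩
      neg_mem' := by
        rintro x ⟨m1, k1, rfl⟩
        exact ⟨-m1, -k1, by push_cast; ring⟩ } with hH
  rcases H.dense_or_cyclic with hd | ⟨r, hr⟩
  · obtain ⟨x, hxH, hx⟩ := hd.exists_mem_open isOpen_Ioo
      (⟨δ * 3 / 4, by constructor <;> linarith⟩ : (Ioo (δ/2) δ).Nonempty)
    obtain ⟨m, k, rfl⟩ := hxH
    refine ⟨-k, m, ?_, ?_⟩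
    · simp only [cross2]; push_cast
      have := hx.1
      nlinarith [hx.1, hδ]
    · simp only [cross2]; push_cast
      nlinarith [hx.2]
  · have hw1 : w.1 ∈ H := ⟨1, 0, by push_cast; ring⟩
    have hw2 : w.2 ∈ H := ⟨0, 1, by push_cast; ring⟩
    rw [hr, AddSubgroup.mem_closure_singleton] at hw1 hw2
    obtain ⟨p, hp⟩ := hw1
    obtain ⟨q, hq⟩ := hw2
    have hkey : (q:ℝ) * w.1 + (-p:ℝ) * w.2 = 0 := by
      rw [← hp, ← hq]
      push_cast
      simp only [zsmul_eq_mul] at *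
      ring
    have := irr_coords hw hirr q (-p) (by push_cast at hkey ⊢; linarith [hkey])
    exfalso
    apply hw
    have hp0 : p = 0 := by omega
    have hq0 : q = 0 := this.1
    rw [hp0] at hp; rw [hq0] at hq
    simp only [zero_zsmul] at hp hq
    exact Prod.ext hp.symm hq.symm

lemma covering {w : ℝ × ℝ} (hw : w ≠ 0) (p q : ℝ) :
    ∃ m k : ℤ, |dot2 ((m:ℝ),(k:ℝ)) w - p| ≤ Real.sqrt (dot2 w w) ∧
      |cross2 w ((m:ℝ),(k:ℝ)) - q| ≤ Real.sqrt (dot2 w w) := by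
  have hn2 := dot2_self_pos hw
  obtain ⟨P1, P2, hP1, hP2⟩ : ∃ P1 P2 : ℝ, dot2 (P1, P2) w = p ∧ cross2 w (P1, P2) = q := by
    have hne : w.1 * w.1 + w.2 * w.2 ≠ 0 := by
      simpa [dot2] using hn2.ne'
    refine ⟨(p * w.1 - q * w.2) / dot2 w w, (p * w.2 + q * w.1) / dot2 w w, ?_, ?_⟩
    · simp only [dot2]
      rw [div_mul_eq_mul_div, div_mul_eq_mul_div, ← add_div, div_eq_iff hne]
      ring
    · simp only [cross2, dot2]
      rw [mul_div_assoc', mul_div_assoc', div_sub_div_same, div_eq_iff hne]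
      ring
  have hsmall : ∀ x : ℝ, |((round x : ℤ):ℝ) - x| ≤ 1/2 := fun x => by
    rw [abs_sub_comm]; exact abs_sub_round x
  have henorm : enorm2 ((((round P1 : ℤ):ℝ), ((round P2 : ℤ):ℝ)) - (P1, P2)) ≤ 1 := by
    rw [enorm2, show (1:ℝ) = Real.sqrt 1 by simp]
    apply Real.sqrt_le_sqrt
    have h1 := hsmall P1
    have h2 := hsmall P2
    simp only [Prod.fst_sub, Prod.snd_sub]
    nlinarith [abs_nonneg (((round P1 : ℤ):ℝ) - P1), abs_nonneg (((round P2 : ℤ):ℝ) - P2),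
      sq_abs (((round P1 : ℤ):ℝ) - P1), sq_abs (((round P2 : ℤ):ℝ) - P2)]
  refine ⟨round P1, round P2, ?_, ?_⟩
  · have heq : dot2 (((round P1 : ℤ):ℝ), ((round P2 : ℤ):ℝ)) w - p
        = dot2 ((((round P1 : ℤ):ℝ), ((round P2 : ℤ):ℝ)) - (P1, P2)) w := by
      rw [← hP1]; simp only [dot2, Prod.fst_sub, Prod.snd_sub]; ring
    rw [heq]
    calc |dot2 ((((round P1 : ℤ):ℝ), ((round P2 : ℤ):ℝ)) - (P1, P2)) w|
        ≤ Real.sqrt (dot2 w w) * enorm2 ((((round P1 : ℤ):ℝ), ((round P2 : ℤ):ℝ)) - (P1, P2)) :=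
          abs_dot2_le _ _
      _ ≤ Real.sqrt (dot2 w w) * 1 :=
          mul_le_mul_of_nonneg_left henorm (Real.sqrt_nonneg _)
      _ = Real.sqrt (dot2 w w) := mul_one _
  · have heq : cross2 w (((round P1 : ℤ):ℝ), ((round P2 : ℤ):ℝ)) - q
        = cross2 w ((((round P1 : ℤ):ℝ), ((round P2 : ℤ):ℝ)) - (P1, P2)) := by
      rw [← hP2]; simp only [cross2, Prod.fst_sub, Prod.snd_sub]; ring
    rw [heq]
    calc |cross2 w ((((round P1 : ℤ):ℝ), ((round P2 : ℤ):ℝ)) - (P1, P2))|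
        ≤ Real.sqrt (dot2 w w) * enorm2 ((((round P1 : ℤ):ℝ), ((round P2 : ℤ):ℝ)) - (P1, P2)) :=
          abs_cross2_le _ _
      _ ≤ Real.sqrt (dot2 w w) * 1 :=
          mul_le_mul_of_nonneg_left henorm (Real.sqrt_nonneg _)
      _ = Real.sqrt (dot2 w w) := mul_one _

lemma pT_add_int (v : ℝ × ℝ) (m k : ℤ) : pT (v + ((m:ℝ),(k:ℝ))) = pT v := by
  have key : ∀ (x : ℝ) (n : ℤ), ((x + (n:ℝ) : ℝ) : AddCircle (1:ℝ)) = (x : AddCircle (1:ℝ)) := by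
    intro x n
    have : ((x + (n:ℝ) : ℝ) : AddCircle (1:ℝ)) = (x : AddCircle (1:ℝ)) + ((n:ℝ) : AddCircle (1:ℝ)) := by
      push_cast; rfl
    rw [this]
    have h0 : (((n:ℝ)) : AddCircle (1:ℝ)) = 0 := by
      have : (n:ℝ) = n • (1:ℝ) := by simp
      rw [this, AddCircle.coe_zsmul]
      simp [AddCircle.coe_period]
    rw [h0, add_zero]
  simp only [pT, Prod.fst_add, Prod.snd_add]
  exact Prod.ext (key v.1 m) (key v.2 k)

end Lattice

section Curve

lemma hasDeriv_dot {θ : ℝ → ℝ × ℝ} {s : Set ℝ} {t : ℝ} {v : ℝ × ℝ}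
    (h : HasDerivWithinAt θ v s t) (r : ℝ × ℝ) :
    HasDerivWithinAt (fun t => dot2 (θ t) r) (dot2 v r) s t := by
  have h1 : HasDerivWithinAt (fun t => (θ t).1) v.1 s t :=
    (ContinuousLinearMap.hasFDerivAt (ContinuousLinearMap.fst ℝ ℝ ℝ)).comp_hasDerivWithinAt t h
  have h2 : HasDerivWithinAt (fun t => (θ t).2) v.2 s t :=
    (ContinuousLinearMap.hasFDerivAt (ContinuousLinearMap.snd ℝ ℝ ℝ)).comp_hasDerivWithinAt t h
  exact (h1.mul_const r.1).add (h2.mul_const r.2)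

lemma hasDeriv_cross {θ : ℝ → ℝ × ℝ} {s : Set ℝ} {t : ℝ} {v : ℝ × ℝ}
    (h : HasDerivWithinAt θ v s t) (r : ℝ × ℝ) :
    HasDerivWithinAt (fun t => cross2 r (θ t)) (cross2 r v) s t := by
  have h1 : HasDerivWithinAt (fun t => (θ t).1) v.1 s t :=
    (ContinuousLinearMap.hasFDerivAt (ContinuousLinearMap.fst ℝ ℝ ℝ)).comp_hasDerivWithinAt t h
  have h2 : HasDerivWithinAt (fun t => (θ t).2) v.2 s t :=
    (ContinuousLinearMap.hasFDerivAt (ContinuousLinearMap.snd ℝ ℝ ℝ)).comp_hasDerivWithinAt t h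
  exact (h2.const_mul r.1).sub (h1.const_mul r.2)

lemma continuous_enorm2 : Continuous enorm2 := by
  unfold enorm2
  fun_prop

/-- Main curve package. -/
lemma curve_pkg {θ : ℝ → ℝ × ℝ} {a b : ℝ} (hab : a < b) (hθ : ContDiffOn ℝ 1 θ (Set.Icc a b))
    (p q : ℝ × ℝ) (K C : ℝ)
    (hpos : ∀ t ∈ Set.Icc a b, 0 < dot2 (derivWithin θ (Set.Icc a b) t) p)
    (hq : ∀ t ∈ Set.Icc a b, |cross2 q (derivWithin θ (Set.Icc a b) t)|
        ≤ K * dot2 (derivWithin θ (Set.Icc a b) t) p)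
    (hC : ∀ t ∈ Set.Icc a b, enorm2 (derivWithin θ (Set.Icc a b) t)
        ≤ C * dot2 (derivWithin θ (Set.Icc a b) t) p) :
    StrictMonoOn (fun t => dot2 (θ t) p) (Set.Icc a b) ∧
    (∀ s ∈ Set.Icc a b, ∀ t ∈ Set.Icc a b, s ≤ t →
      |cross2 q (θ t) - cross2 q (θ s)| ≤ K * (dot2 (θ t) p - dot2 (θ s) p)) ∧
    curveLength θ a b ≤ C * (dot2 (θ b) p - dot2 (θ a) p) := by
  have hudiff : UniqueDiffOn ℝ (Set.Icc a b) := uniqueDiffOn_Icc hab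
  set D := derivWithin θ (Set.Icc a b) with hD
  have hDcont : ContinuousOn D (Set.Icc a b) := hθ.continuousOn_derivWithin hudiff le_rfl
  have hder : ∀ t ∈ Set.Icc a b, HasDerivWithinAt θ (D t) (Set.Icc a b) t := fun t ht =>
    ((hθ.differentiableOn one_ne_zero) t ht).hasDerivWithinAt
  have hθc : ContinuousOn θ (Set.Icc a b) := hθ.continuousOn
  have hPcont : ContinuousOn (fun t => dot2 (θ t) p) (Set.Icc a b) := by
    simp only [dot2]
    exact ((hθc.fst.mul continuousOn_const).add (hθc.snd.mul continuousOn_const))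
  have hQcont : ContinuousOn (fun t => cross2 q (θ t)) (Set.Icc a b) := by
    simp only [cross2]
    exact ((hθc.snd.const_smul q.1).sub (hθc.fst.const_smul q.2))
  have hPder : ∀ t ∈ Set.Ioo a b, HasDerivAt (fun t => dot2 (θ t) p) (dot2 (D t) p) t :=
    fun t ht => (hasDeriv_dot (hder t (Set.mem_Icc_of_Ioo ht)) p).hasDerivAt
      (Icc_mem_nhds ht.1 ht.2)
  have hmono : StrictMonoOn (fun t => dot2 (θ t) p) (Set.Icc a b) := by
    apply strictMonoOn_of_deriv_pos (convex_Icc a b) hPcont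
    intro x hx
    rw [interior_Icc] at hx
    rw [(hPder x hx).deriv]
    exact hpos x (Set.mem_Icc_of_Ioo hx)
  refine ⟨hmono, ?_, ?_⟩
  · -- Lipschitz-type estimate
    have key : ∀ (σ : ℝ), σ = 1 ∨ σ = -1 →
        MonotoneOn (fun t => K * dot2 (θ t) p + σ * cross2 q (θ t)) (Set.Icc a b) := by
      intro σ hσ
      apply monotoneOn_of_deriv_nonneg (convex_Icc a b)
      · exact (hPcont.const_smul K).add (hQcont.const_smul σ)
      · intro x hx
        rw [interior_Icc] at hx
        have h1 := (hPder x hx).const_mul K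
        have h2 := ((hasDeriv_cross (hder x (Set.mem_Icc_of_Ioo hx)) q).hasDerivAt
          (Icc_mem_nhds hx.1 hx.2)).const_mul σ
        exact (h1.add h2).differentiableAt.differentiableWithinAt
      · intro x hx
        rw [interior_Icc] at hx
        have h1 := (hPder x hx).const_mul K
        have h2 := ((hasDeriv_cross (hder x (Set.mem_Icc_of_Ioo hx)) q).hasDerivAt
          (Icc_mem_nhds hx.1 hx.2)).const_mul σ
        have h3 : HasDerivAt (fun t => K * dot2 (θ t) p + σ * cross2 q (θ t))
            (K * dot2 (D x) p + σ * cross2 q (D x)) x := h1.add h2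
        rw [h3.deriv]
        have hx' := Set.mem_Icc_of_Ioo hx
        have := hq x hx'
        rcases hσ with rfl | rfl
        · have := abs_le.mp this
          nlinarith [this.1, this.2]
        · have := abs_le.mp this
          nlinarith [this.1, this.2]
    intro s hs t ht hst
    have h1 := key 1 (Or.inl rfl) hs ht hst
    have h2 := key (-1) (Or.inr rfl) hs ht hst
    simp only at h1 h2
    rw [abs_le]
    constructor <;> nlinarith [h1, h2]
  · -- length estimate
    have hFTC : ∫ t in a..b, dot2 (D t) p = dot2 (θ b) p - dot2 (θ a) p := by
      apply intervalIntegral.integral_eq_sub_of_hasDeriv_right_of_le hab.le hPcont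
      · intro x hx
        exact (hPder x hx).hasDerivWithinAt
      · apply ContinuousOn.intervalIntegrable
        rw [Set.uIcc_of_le hab.le]
        simp only [dot2]
        exact ((hDcont.fst.mul continuousOn_const).add (hDcont.snd.mul continuousOn_const))
    have hint1 : IntervalIntegrable (fun t => enorm2 (D t)) MeasureTheory.volume a b := by
      apply ContinuousOn.intervalIntegrable
      rw [Set.uIcc_of_le hab.le]
      exact continuous_enorm2.comp_continuousOn hDcont
    have hint2 : IntervalIntegrable (fun t => C * dot2 (D t) p) MeasureTheory.volume a b := by
      apply ContinuousOn.intervalIntegrable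
      rw [Set.uIcc_of_le hab.le]
      apply ContinuousOn.mul continuousOn_const
      simp only [dot2]
      exact ((hDcont.fst.mul continuousOn_const).add (hDcont.snd.mul continuousOn_const))
    calc curveLength θ a b = ∫ t in a..b, enorm2 (D t) := rfl
      _ ≤ ∫ t in a..b, C * dot2 (D t) p := by
          apply intervalIntegral.integral_mono_on hab.le hint1 hint2
          intro x hx
          exact hC x hx
      _ = C * ∫ t in a..b, dot2 (D t) p := by
          rw [← intervalIntegral.integral_const_mul]
      _ = C * (dot2 (θ b) p - dot2 (θ a) p) := by rw [hFTC]

/-- Continuous inverse for a strictly monotone continuous function on an interval,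
paired with evaluation of another function. -/
lemma exists_cont_inverse {f g : ℝ → ℝ} {a b : ℝ} (hab : a ≤ b)
    (hf : ContinuousOn f (Set.Icc a b)) (hmono : StrictMonoOn f (Set.Icc a b))
    (hg : ContinuousOn g (Set.Icc a b)) :
    ∃ F : ℝ → ℝ, Continuous F ∧
      ∀ ξ ∈ Set.Icc (f a) (f b), ∃ s ∈ Set.Icc a b, f s = ξ ∧ F ξ = g s := by
  rcases eq_or_lt_of_le hab with rfl | hab'
  · refine ⟨fun _ => g a, continuous_const, fun ξ hξ => ⟨a, by simp, ?_, rfl⟩⟩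
    have h1 : f a ≤ ξ := by simpa using hξ.1
    have h2 : ξ ≤ f a := by simpa using hξ.2
    linarith
  have hmem : ∀ t : Set.Icc a b, f t ∈ Set.Icc (f a) (f b) := by
    rintro ⟨t, ht⟩
    exact ⟨hmono.monotoneOn (Set.left_mem_Icc.mpr hab) ht ht.1,
      hmono.monotoneOn ht (Set.right_mem_Icc.mpr hab) ht.2⟩
  set φ : Set.Icc a b → Set.Icc (f a) (f b) := fun t => ⟨f t, hmem t⟩ with hφ
  have hφcont : Continuous φ := by
    apply Continuous.subtype_mk
    exact hf.restrict
  have hφbij : Function.Bijective φ := by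
    constructor
    · rintro ⟨s, hs⟩ ⟨t, ht⟩ h
      simp only [hφ, Subtype.mk.injEq] at h
      exact Subtype.ext (hmono.injOn hs ht h)
    · rintro ⟨ξ, hξ⟩
      obtain ⟨s, hs, hfs⟩ := intermediate_value_Icc hab hf hξ
      exact ⟨⟨s, hs⟩, Subtype.ext hfs⟩
  have hcompact : CompactSpace (Set.Icc a b) := by infer_instance
  have hfab : f a ≤ f b :=
    (hmono (Set.left_mem_Icc.mpr hab) (Set.right_mem_Icc.mpr hab) hab').le
  set e : Set.Icc a b ≃ Set.Icc (f a) (f b) := Equiv.ofBijective φ hφbij with he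
  have hφe : Continuous (e : Set.Icc a b → Set.Icc (f a) (f b)) := hφcont
  set h : Set.Icc a b ≃ₜ Set.Icc (f a) (f b) :=
    Continuous.homeoOfEquivCompactToT2 (f := e) hφe with hh
  set clamp : ℝ → ℝ := fun ξ => max (f a) (min (f b) ξ) with hclamp
  have hclampmem : ∀ ξ, clamp ξ ∈ Set.Icc (f a) (f b) := fun ξ =>
    ⟨le_max_left _ _, max_le hfab (min_le_left _ _)⟩
  have hclampcont : Continuous clamp := by
    apply Continuous.max continuous_const
    exact Continuous.min continuous_const continuous_id
  refine ⟨fun ξ => g ((h.symm ⟨clamp ξ, hclampmem ξ⟩ : Set.Icc a b) : ℝ), ?_, ?_⟩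
  · apply hg.restrict.comp
    apply h.symm.continuous.comp
    exact Continuous.subtype_mk hclampcont _
  · intro ξ hξ
    have hclampeq : clamp ξ = ξ := by
      rw [hclamp]
      simp only
      rw [min_eq_right hξ.2, max_eq_right hξ.1]
    refine ⟨(h.symm ⟨clamp ξ, hclampmem ξ⟩ : Set.Icc a b), (h.symm ⟨clamp ξ, hclampmem ξ⟩).2,
      ?_, rfl⟩
    have happ : φ (h.symm ⟨clamp ξ, hclampmem ξ⟩) = ⟨clamp ξ, hclampmem ξ⟩ :=
      h.apply_symm_apply ⟨clamp ξ, hclampmem ξ⟩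
    have := congrArg Subtype.val happ
    simp only [hφ] at this
    rw [this, hclampeq]

lemma sign_const {f : ℝ → ℝ} {a b : ℝ} (hf : ContinuousOn f (Set.Icc a b))
    (h0 : ∀ t ∈ Set.Icc a b, f t ≠ 0) :
    (∀ t ∈ Set.Icc a b, 0 < f t) ∨ (∀ t ∈ Set.Icc a b, f t < 0) := by
  by_contra hcon
  push_neg at hcon
  obtain ⟨⟨t1, ht1, h1⟩, ⟨t2, ht2, h2⟩⟩ := hcon
  have hsub : Set.uIcc t1 t2 ⊆ Set.Icc a b := Set.uIcc_subset_Icc ht1 ht2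
  have h0' : (0:ℝ) ∈ Set.uIcc (f t1) (f t2) := Set.mem_uIcc.mpr (Or.inl ⟨h1, h2⟩)
  obtain ⟨t0, ht0, hf0⟩ := intermediate_value_uIcc (hf.mono hsub) h0'
  exact h0 t0 (hsub ht0) hf0

lemma enorm_div_bound {e X Y N A dp : ℝ} (hN : 0 < N) (h1 : N * e ≤ X + Y)
    (h2 : Y ≤ A * X) (h3 : X = dp) : e ≤ (1+A)/N * dp := by
  rw [div_mul_eq_mul_div, le_div_iff₀ hN, ← h3]
  nlinarith

lemma div_bound_aux {X Y A : ℝ} (hA : 0 < A) (h : A * X ≤ Y) : X ≤ 1/A * Y := by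
  rw [div_mul_eq_mul_div, le_div_iff₀ hA, mul_comm]
  linarith

lemma dot2_smul_right (v u : ℝ × ℝ) (σ : ℝ) : dot2 v (σ • u) = σ * dot2 v u := by
  simp only [dot2, Prod.smul_fst, Prod.smul_snd, smul_eq_mul]; ring

lemma dot2_add_left (u z w : ℝ × ℝ) : dot2 (u + z) w = dot2 u w + dot2 z w := by
  simp only [dot2, Prod.fst_add, Prod.snd_add]; ring

lemma cross2_add_right (w u z : ℝ × ℝ) : cross2 w (u + z) = cross2 w u + cross2 w z := by
  simp only [cross2, Prod.fst_add, Prod.snd_add]; ring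

end Curve
end LCCI

set_option maxHeartbeats 2000000 in
open LCCI in
/-- **Lemma 2.3.1.** Cone-tangent curves around an irrational direction `w` of length at
least `M` intersect every curve of length at least `ε` tangent to a transversal cone. -/
theorem long_cone_curves_intersect
    (w w1 wp w1p : ℝ × ℝ) (hw : w ≠ 0)
    -- `w` is an irrational direction : `ℝw ∩ (ℤ² ∖ {0}) = ∅`
    (hirr : ∀ (c : ℝ) (m k : ℤ), c • w = ((m : ℝ), (k : ℝ)) → m = 0 ∧ k = 0)
    -- `w₁` is linearly independent from `w`
    (hindep : ∀ s t : ℝ, s • w + t • w1 = 0 → s = 0 ∧ t = 0)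
    -- `w^⊥`, `w₁^⊥` are nonzero orthogonal vectors to `w`, `w₁`
    (hwp : wp ≠ 0) (hw1p : w1p ≠ 0) (horth : dot2 w wp = 0) (horth1 : dot2 w1 w1p = 0)
    -- `a₀ > 0` is small enough that the two cones are disjoint
    (a₀ : ℝ) (ha₀ : 0 < a₀) (hdisj : coneW w wp a₀ ∩ coneW w1 w1p a₀ = ∅)
    (ε : ℝ) (hε : 0 < ε) :
    ∃ a₁ ∈ Set.Ioo (0:ℝ) a₀, ∃ M > (0:ℝ),
      ∀ (γ : ℝ → ℝ × ℝ) (α β' : ℝ), α ≤ β' → ContDiffOn ℝ 1 γ (Set.Icc α β') →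
        (∀ t ∈ Set.Icc α β', derivWithin γ (Set.Icc α β') t ∈ coneW w wp a₁) →
        M ≤ curveLength γ α β' →
        ∀ (β : ℝ → ℝ × ℝ) (c d : ℝ), c ≤ d → ContDiffOn ℝ 1 β (Set.Icc c d) →
          (∀ t ∈ Set.Icc c d, derivWithin β (Set.Icc c d) t ∈ coneW w1 w1p a₁) →
          ε ≤ curveLength β c d →
          ∃ s ∈ Set.Icc α β', ∃ t ∈ Set.Icc c d, pT (γ s) = pT (β t) := by
  classical
  have hw1 : w1 ≠ 0 := by
    intro h
    have := hindep 0 1 (by simp [h])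
    exact one_ne_zero this.2
  have hn2 : 0 < dot2 w w := dot2_self_pos hw
  set N := Real.sqrt (dot2 w w) with hN
  have hNpos : 0 < N := Real.sqrt_pos.mpr hn2
  have hdwp : dot2 wp w = 0 := by simp only [dot2] at horth ⊢; linarith
  have hκ : cross2 w wp ≠ 0 := fun h => hwp (coords_zero hw hdwp h)
  have hκpos : 0 < |cross2 w wp| := abs_pos.mpr hκ
  set A₀ : ℝ := a₀ * |cross2 w wp| / dot2 w w with hA₀def
  have hA₀pos : 0 < A₀ := div_pos (mul_pos ha₀ hκpos) hn2
  set ρ : ℝ := N * ε * A₀ / (2 * (1 + A₀)) with hρdef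
  have hρpos : 0 < ρ := by
    apply div_pos (by positivity)
    positivity
  set δ : ℝ := ρ / 4 with hδdef
  have hδpos : 0 < δ := by positivity
  obtain ⟨mu, ku, hηpos, hηle⟩ := exists_small_cross hw hirr hδpos
  set ηa := cross2 w (((mu:ℤ):ℝ), ((ku:ℤ):ℝ)) with hηdef
  set xu := dot2 (((mu:ℤ):ℝ), ((ku:ℤ):ℝ)) w with hxudef
  set Xu := |xu| with hXudef
  have hXu0 : 0 ≤ Xu := abs_nonneg _
  set A₁ : ℝ := min (min 1 (A₀/4)) (ηa/(2*(Xu+1))) with hA₁def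
  have hA₁pos : 0 < A₁ := lt_min (lt_min one_pos (by positivity)) (by positivity)
  have hA₁le1 : A₁ ≤ 1 := le_trans (min_le_left _ _) (min_le_left _ _)
  have hA₁leA₀4 : A₁ ≤ A₀/4 := le_trans (min_le_left _ _) (min_le_right _ _)
  have hA₁η : A₁ * (Xu + 1) ≤ ηa / 2 := by
    have h1 : A₁ ≤ ηa/(2*(Xu+1)) := min_le_right _ _
    have h2 : A₁ * (Xu+1) ≤ (ηa/(2*(Xu+1))) * (Xu+1) :=
      mul_le_mul_of_nonneg_right h1 (by positivity)
    have h3 : (ηa/(2*(Xu+1))) * (Xu+1) = ηa/2 := by field_simp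
    linarith
  set a₁ : ℝ := A₁ * dot2 w w / |cross2 w wp| with ha₁def
  have ha₁pos : 0 < a₁ := by positivity
  have ha₁A : a₁ * |cross2 w wp| / dot2 w w = A₁ := by
    rw [ha₁def]; field_simp
  have ha₁lt : a₁ < a₀ := by
    have hlt : A₁ < A₀ := lt_of_le_of_lt hA₁leA₀4 (by linarith)
    have key : A₀ * dot2 w w = a₀ * |cross2 w wp| := by
      rw [hA₀def]; field_simp
    rw [ha₁def, div_lt_iff₀ hκpos, ← key]
    exact mul_lt_mul_of_pos_right hlt hn2
  set Δm : ℝ := ρ / A₀ with hΔmdef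
  have hΔmpos : 0 < Δm := by positivity
  set J : ℕ := ⌈(8*N + 4*δ)/ηa⌉₊ + 1 with hJdef
  have hJη : 8*N + 4*δ ≤ (J:ℝ) * ηa := by
    have h1 : (8*N + 4*δ)/ηa ≤ (J:ℝ) := by
      refine le_trans (Nat.le_ceil _) ?_
      rw [hJdef]; push_cast; linarith
    calc 8*N+4*δ = ((8*N+4*δ)/ηa)*ηa := by field_simp
      _ ≤ (J:ℝ)*ηa := mul_le_mul_of_nonneg_right h1 hηpos.le
  have hJ0 : (0:ℝ) ≤ (J:ℝ) := Nat.cast_nonneg _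
  set LX : ℝ := 2*Δm + 2*(J:ℝ)*Xu + 2*N + 2 with hLXdef
  have hLXpos : 0 < LX := by positivity
  set M : ℝ := (1 + A₁) * LX / N with hMdef
  have hMpos : 0 < M := by positivity
  clear_value N A₀ ρ δ ηa xu Xu A₁ a₁ Δm J LX M
  refine ⟨a₁, ⟨ha₁pos, ha₁lt⟩, M, hMpos, ?_⟩
  intro γ α β' hαβ hγC1 hγcone hγlen β c d hcd hβC1 hβcone hβlen
  have hαβ' : α < β' := by
    rcases lt_or_eq_of_le hαβ with h | h
    · exact h
    · exfalso
      rw [← h] at hγlen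
      unfold curveLength at hγlen
      rw [intervalIntegral.integral_same] at hγlen
      linarith
  have hcd' : c < d := by
    rcases lt_or_eq_of_le hcd with h | h
    · exact h
    · exfalso
      rw [← h] at hβlen
      unfold curveLength at hβlen
      rw [intervalIntegral.integral_same] at hβlen
      linarith
  -- γ-side cone data
  set Dγ := derivWithin γ (Set.Icc α β') with hDγdef
  have hγdata : ∀ t ∈ Set.Icc α β',
      |cross2 w (Dγ t)| < A₁ * |dot2 (Dγ t) w| ∧ dot2 (Dγ t) w ≠ 0 := by
    intro t ht
    have hmem := hγcone t ht
    rw [cone_mem_iff hw hwp horth, ha₁A] at hmem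
    refine ⟨hmem, ?_⟩
    intro h0
    rw [h0] at hmem
    simp only [abs_zero, mul_zero] at hmem
    exact (abs_nonneg _).not_gt hmem
  have hDγcont : ContinuousOn Dγ (Set.Icc α β') :=
    hγC1.continuousOn_derivWithin (uniqueDiffOn_Icc hαβ') le_rfl
  have hfγcont : ContinuousOn (fun t => dot2 (Dγ t) w) (Set.Icc α β') := by
    simp only [dot2]
    exact (hDγcont.fst.mul continuousOn_const).add (hDγcont.snd.mul continuousOn_const)
  obtain ⟨σ, hσ1, hσpos⟩ : ∃ σ : ℝ, (σ = 1 ∨ σ = -1) ∧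
      ∀ t ∈ Set.Icc α β', 0 < σ * dot2 (Dγ t) w := by
    rcases sign_const hfγcont (fun t ht => (hγdata t ht).2) with hp | hn
    · exact ⟨1, Or.inl rfl, fun t ht => by rw [one_mul]; exact hp t ht⟩
    · exact ⟨-1, Or.inr rfl, fun t ht => by
        have := hn t ht; linarith⟩
  have hσabs : |σ| = 1 := by rcases hσ1 with rfl | rfl <;> simp
  have hσsq : σ * σ = 1 := by rcases hσ1 with rfl | rfl <;> norm_num
  have hσne : σ ≠ 0 := by rcases hσ1 with rfl | rfl <;> norm_num
  set p : ℝ × ℝ := σ • w with hpdef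
  have hdotp : ∀ v : ℝ × ℝ, dot2 v p = σ * dot2 v w := fun v => dot2_smul_right v w σ
  have hposγ : ∀ t ∈ Set.Icc α β', 0 < dot2 (Dγ t) p := fun t ht => by
    rw [hdotp]; exact hσpos t ht
  have habsγ : ∀ t ∈ Set.Icc α β', |dot2 (Dγ t) w| = dot2 (Dγ t) p := by
    intro t ht
    have h1 : |σ * dot2 (Dγ t) w| = σ * dot2 (Dγ t) w := abs_of_pos (hσpos t ht)
    rw [abs_mul, hσabs, one_mul] at h1
    rw [h1, hdotp]
  have hqγ : ∀ t ∈ Set.Icc α β', |cross2 w (Dγ t)| ≤ A₁ * dot2 (Dγ t) p := fun t ht => by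
    rw [← habsγ t ht]; exact (hγdata t ht).1.le
  have hCγ : ∀ t ∈ Set.Icc α β', enorm2 (Dγ t) ≤ (1+A₁)/N * dot2 (Dγ t) p := fun t ht =>
    enorm_div_bound hNpos (by rw [hN]; exact enorm2_le_coords w (Dγ t)) (hγdata t ht).1.le (habsγ t ht)
  obtain ⟨hγmono, hγlip, hγlenle⟩ :=
    curve_pkg hαβ' hγC1 p w A₁ ((1+A₁)/N) hposγ hqγ hCγ
  have hΔX : LX ≤ dot2 (γ β') p - dot2 (γ α) p := by
    have h := le_trans hγlen hγlenle
    rw [hMdef] at h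
    have h1 : 0 < (1+A₁)/N := div_pos (by linarith) hNpos
    have h2 : (1+A₁) * LX / N = (1+A₁)/N * LX := by ring
    rw [h2] at h
    exact (mul_le_mul_iff_right₀ h1).mp h
  -- β-side cone data
  set Dβ := derivWithin β (Set.Icc c d) with hDβdef
  have hβdata : ∀ t ∈ Set.Icc c d,
      A₀ * |dot2 (Dβ t) w| ≤ |cross2 w (Dβ t)| ∧ cross2 w (Dβ t) ≠ 0 := by
    intro t ht
    have hv := hβcone t ht
    have hvne : Dβ t ≠ 0 := cone_ne_zero hw1 hw1p horth1 hv
    have hv0 : Dβ t ∈ coneW w1 w1p a₀ := cone_mono ha₁lt.le hv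
    have hnot : Dβ t ∉ coneW w wp a₀ := by
      intro hmem
      have hin : Dβ t ∈ coneW w wp a₀ ∩ coneW w1 w1p a₀ := ⟨hmem, hv0⟩
      rw [hdisj] at hin
      exact hin
    rw [cone_mem_iff hw hwp horth] at hnot
    push_neg at hnot
    rw [← hA₀def] at hnot
    refine ⟨hnot, ?_⟩
    intro h0
    rw [h0] at hnot
    simp only [abs_zero] at hnot
    have hd0 : dot2 (Dβ t) w = 0 := by
      have h6 : 0 ≤ A₀ * |dot2 (Dβ t) w| := mul_nonneg hA₀pos.le (abs_nonneg _)
      have h7 : A₀ * |dot2 (Dβ t) w| = 0 := le_antisymm hnot h6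
      have h8 := (mul_eq_zero.mp h7).resolve_left hA₀pos.ne'
      exact abs_eq_zero.mp h8
    exact hvne (coords_zero hw hd0 h0)
  have hDβcont : ContinuousOn Dβ (Set.Icc c d) :=
    hβC1.continuousOn_derivWithin (uniqueDiffOn_Icc hcd') le_rfl
  have hgβcont : ContinuousOn (fun t => cross2 w (Dβ t)) (Set.Icc c d) := by
    simp only [cross2]
    exact (continuousOn_const.mul hDβcont.snd).sub (continuousOn_const.mul hDβcont.fst)
  obtain ⟨τ, hτ1, hτpos⟩ : ∃ τ : ℝ, (τ = 1 ∨ τ = -1) ∧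
      ∀ t ∈ Set.Icc c d, 0 < τ * cross2 w (Dβ t) := by
    rcases sign_const hgβcont (fun t ht => (hβdata t ht).2) with hp | hn
    · exact ⟨1, Or.inl rfl, fun t ht => by rw [one_mul]; exact hp t ht⟩
    · exact ⟨-1, Or.inr rfl, fun t ht => by
        have := hn t ht; linarith⟩
  have hτabs : |τ| = 1 := by rcases hτ1 with rfl | rfl <;> simp
  have hτsq : τ * τ = 1 := by rcases hτ1 with rfl | rfl <;> norm_num
  set pβ : ℝ × ℝ := τ • ((-w.2, w.1) : ℝ × ℝ) with hpβdef
  have hdotpβ : ∀ v : ℝ × ℝ, dot2 v pβ = τ * cross2 w v := by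
    intro v
    simp only [hpβdef, dot2, cross2, Prod.smul_fst, Prod.smul_snd, smul_eq_mul]
    ring
  set qβ : ℝ × ℝ := (w.2, -w.1) with hqβdef
  have hcrossqβ : ∀ v : ℝ × ℝ, cross2 qβ v = dot2 v w := by
    intro v
    simp only [hqβdef, cross2, dot2]
    ring
  have hposβ : ∀ t ∈ Set.Icc c d, 0 < dot2 (Dβ t) pβ := fun t ht => by
    rw [hdotpβ]; exact hτpos t ht
  have habsβ : ∀ t ∈ Set.Icc c d, |cross2 w (Dβ t)| = dot2 (Dβ t) pβ := by
    intro t ht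
    have h1 : |τ * cross2 w (Dβ t)| = τ * cross2 w (Dβ t) := abs_of_pos (hτpos t ht)
    rw [abs_mul, hτabs, one_mul] at h1
    rw [h1, hdotpβ]
  have hqβ' : ∀ t ∈ Set.Icc c d, |cross2 qβ (Dβ t)| ≤ (1/A₀) * dot2 (Dβ t) pβ := by
    intro t ht
    rw [hcrossqβ, ← habsβ t ht]
    exact div_bound_aux hA₀pos (hβdata t ht).1
  have hCβ : ∀ t ∈ Set.Icc c d, enorm2 (Dβ t) ≤ (1+1/A₀)/N * dot2 (Dβ t) pβ := fun t ht =>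
    enorm_div_bound hNpos (by rw [hN]; exact (enorm2_le_coords w (Dβ t)).trans_eq (add_comm _ _))
      (div_bound_aux hA₀pos (hβdata t ht).1) (habsβ t ht)
  obtain ⟨hβmono, hβlip, hβlenle⟩ :=
    curve_pkg hcd' hβC1 pβ qβ (1/A₀) ((1+1/A₀)/N) hposβ hqβ' hCβ
  have hΔY : 2*ρ ≤ dot2 (β d) pβ - dot2 (β c) pβ := by
    have h := le_trans hβlen hβlenle
    set ΔY := dot2 (β d) pβ - dot2 (β c) pβ with hΔYdef
    clear_value ΔY
    have h1 : ε * N ≤ (1 + 1/A₀) * ΔY := by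
      rw [div_mul_eq_mul_div, le_div_iff₀ hNpos] at h
      linarith
    have h2 : 2*ρ = N*ε*A₀/(1+A₀) := by
      have hne : (1+A₀) ≠ 0 := ne_of_gt (by linarith)
      rw [hρdef]
      field_simp
    rw [h2, div_le_iff₀ (by linarith : (0:ℝ) < 1+A₀)]
    have h4 := mul_le_mul_of_nonneg_right h1 hA₀pos.le
    have h5 : (1 + 1/A₀) * ΔY * A₀ = ΔY * (1+A₀) := by field_simp; ring
    linarith
  -- continuous inverse for the γ-coordinate
  have hγc : ContinuousOn γ (Set.Icc α β') := hγC1.continuousOn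
  have hXγcont : ContinuousOn (fun t => dot2 (γ t) p) (Set.Icc α β') := by
    simp only [dot2]
    exact (hγc.fst.mul continuousOn_const).add (hγc.snd.mul continuousOn_const)
  have hyγcont : ContinuousOn (fun t => cross2 w (γ t)) (Set.Icc α β') := by
    simp only [cross2]
    exact (continuousOn_const.mul hγc.snd).sub (continuousOn_const.mul hγc.fst)
  obtain ⟨F, hFcont, hFprop⟩ := exists_cont_inverse hαβ'.le hXγcont hγmono hyγcont
  set Xα := dot2 (γ α) p with hXαdef
  set Xω := dot2 (γ β') p with hXωdef
  clear_value Xα Xω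
  have hFlipkey : ∀ ξ ∈ Set.Icc Xα Xω, ∀ ξ' ∈ Set.Icc Xα Xω, ξ ≤ ξ' →
      |F ξ' - F ξ| ≤ A₁ * (ξ' - ξ) := by
    intro ξ hξ ξ' hξ' hle
    obtain ⟨s, hs, hfs, hFs⟩ := hFprop ξ hξ
    obtain ⟨s', hs', hfs', hFs'⟩ := hFprop ξ' hξ'
    have hfs2 : dot2 (γ s) p = ξ := hfs
    have hfs2' : dot2 (γ s') p = ξ' := hfs'
    have hss : s ≤ s' := by
      by_contra hgt
      push_neg at hgt
      have h := hγmono hs' hs hgt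
      simp only at h
      rw [hfs2, hfs2'] at h
      linarith only [h, hle]
    have h2 := hγlip s hs s' hs' hss
    rw [hfs2, hfs2'] at h2
    rw [hFs, hFs']
    exact h2
  have hFlip : ∀ ξ ∈ Set.Icc Xα Xω, ∀ ξ' ∈ Set.Icc Xα Xω,
      |F ξ' - F ξ| ≤ A₁ * |ξ' - ξ| := by
    intro ξ hξ ξ' hξ'
    rcases le_total ξ ξ' with h | h
    · rw [abs_of_nonneg (sub_nonneg.mpr h)]
      exact hFlipkey ξ hξ ξ' hξ' h
    · rw [abs_of_nonpos (sub_nonpos.mpr h), abs_sub_comm]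
      exact (hFlipkey ξ' hξ' ξ hξ h).trans_eq (by ring)
  -- β-side midpoints
  have hβc : ContinuousOn β (Set.Icc c d) := hβC1.continuousOn
  have hYβcont : ContinuousOn (fun t => dot2 (β t) pβ) (Set.Icc c d) := by
    simp only [dot2]
    exact (hβc.fst.mul continuousOn_const).add (hβc.snd.mul continuousOn_const)
  set mid : ℝ := (dot2 (β c) pβ + dot2 (β d) pβ)/2 with hmiddef
  clear_value mid
  obtain ⟨tm, htm, htmeq0⟩ := intermediate_value_Icc hcd'.le hYβcont
    (⟨by rw [hmiddef]; linarith only [hΔY, hρpos], by rw [hmiddef]; linarith only [hΔY, hρpos]⟩ :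
      mid ∈ Set.Icc (dot2 (β c) pβ) (dot2 (β d) pβ))
  have htmeq : dot2 (β tm) pβ = mid := htmeq0
  obtain ⟨tminus, htminus, htminuseq0⟩ := intermediate_value_Icc htm.1
    (hYβcont.mono (Set.Icc_subset_Icc_right htm.2))
    (⟨by rw [hmiddef]; linarith only [hΔY, hρpos],
      by rw [htmeq]; linarith only [hρpos]⟩ :
      mid - ρ ∈ Set.Icc (dot2 (β c) pβ) (dot2 (β tm) pβ))
  have htminuseq : dot2 (β tminus) pβ = mid - ρ := htminuseq0
  obtain ⟨tplus, htplus, htpluseq0⟩ := intermediate_value_Icc htm.2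
    (hYβcont.mono (Set.Icc_subset_Icc_left htm.1))
    (⟨by rw [htmeq]; linarith only [hρpos],
      by rw [hmiddef]; linarith only [hΔY, hρpos]⟩ :
      mid + ρ ∈ Set.Icc (dot2 (β tm) pβ) (dot2 (β d) pβ))
  have htpluseq : dot2 (β tplus) pβ = mid + ρ := htpluseq0
  have htminus' : tminus ∈ Set.Icc c d := ⟨htminus.1, le_trans htminus.2 htm.2⟩
  have htplus' : tplus ∈ Set.Icc c d := ⟨le_trans htm.1 htplus.1, htplus.2⟩
  have htmtp : tminus ≤ tplus := le_trans htminus.2 htplus.1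
  have hsubtt : Set.Icc tminus tplus ⊆ Set.Icc c d := fun x hx =>
    ⟨le_trans htminus'.1 hx.1, le_trans hx.2 htplus'.2⟩
  -- covering translate
  set Zx := dot2 (β tm) w with hZxdef
  set Zy := cross2 w (β tm) with hZydef
  clear_value Zx Zy
  set ξbar : ℝ := Xα + Δm + (J:ℝ)*Xu + N + 1 with hξbardef
  clear_value ξbar
  obtain ⟨m₀, k₀, hm₀x, hm₀y⟩ := covering hw (σ * ξbar - Zx) (F ξbar - Zy - (δ + N + A₁*N))
  rw [← hN] at hm₀x hm₀y
  set xl0 := dot2 (((m₀:ℤ):ℝ), ((k₀:ℤ):ℝ)) w with hxl0def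
  set yl0 := cross2 w (((m₀:ℤ):ℝ), ((k₀:ℤ):ℝ)) with hyl0def
  clear_value xl0 yl0
  set ξf : ℕ → ℝ := fun j => σ * (Zx + xl0 + (j:ℝ) * xu) with hξfdef
  clear_value ξf
  have hJXu : 0 ≤ (J:ℝ) * Xu := mul_nonneg hJ0 hXu0
  have hξbarK : ξbar ∈ Set.Icc Xα Xω := by
    constructor
    · linarith only [hξbardef, hΔmpos, hNpos, hJXu]
    · linarith only [hξbardef, hLXdef, hΔX, hΔmpos, hNpos, hJXu]
  have hξdist : ∀ j : ℕ, j ≤ J → |ξf j - ξbar| ≤ N + (J:ℝ)*Xu := by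
    intro j hj
    have heq : ξf j - ξbar = σ * (xl0 - (σ * ξbar - Zx)) + (j:ℝ) * (σ * xu) := by
      rw [hξfdef]
      simp only
      linear_combination ξbar * hσsq
    rw [heq]
    have h1 : |σ * (xl0 - (σ * ξbar - Zx))| ≤ N := by
      rw [abs_mul, hσabs, one_mul]; exact hm₀x
    have h2 : |(j:ℝ) * (σ * xu)| ≤ (J:ℝ) * Xu := by
      rw [abs_mul, abs_mul, hσabs, one_mul, Nat.abs_cast, ← hXudef]
      exact mul_le_mul (Nat.cast_le.mpr hj) le_rfl hXu0 (Nat.cast_nonneg _)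
    calc |σ * (xl0 - (σ * ξbar - Zx)) + (j:ℝ) * (σ * xu)|
        ≤ |σ * (xl0 - (σ * ξbar - Zx))| + |(j:ℝ) * (σ * xu)| := abs_add_le _ _
      _ ≤ N + (J:ℝ)*Xu := add_le_add h1 h2
  have hξmem : ∀ j : ℕ, j ≤ J → Xα + Δm ≤ ξf j ∧ ξf j ≤ Xω - Δm := by
    intro j hj
    have hd := abs_le.mp (hξdist j hj)
    constructor
    · linarith only [hd.1, hξbardef, hNpos]
    · linarith only [hd.2, hξbardef, hLXdef, hΔX, hNpos]
  have hξK : ∀ j : ℕ, j ≤ J → ξf j ∈ Set.Icc Xα Xω := fun j hj =>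
    ⟨by linarith only [(hξmem j hj).1, hΔmpos], by linarith only [(hξmem j hj).2, hΔmpos]⟩
  set ψ : ℕ → ℝ := fun j => F (ξf j) - (Zy + yl0) - (j:ℝ) * ηa with hψdef
  clear_value ψ
  have hξ0 : |ξf 0 - ξbar| ≤ N := by
    have heq0 : ξf 0 - ξbar = σ * (xl0 - (σ * ξbar - Zx)) := by
      rw [hξfdef]
      simp only [Nat.cast_zero]
      linear_combination ξbar * hσsq
    rw [heq0, abs_mul, hσabs, one_mul]
    exact hm₀x
  have hψ0l : δ ≤ ψ 0 ∧ ψ 0 ≤ δ + 4*N := by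
    have hF0 := hFlip ξbar hξbarK (ξf 0) (hξK 0 (Nat.zero_le J))
    have hFb : |F (ξf 0) - F ξbar| ≤ A₁ * N :=
      le_trans hF0 (mul_le_mul_of_nonneg_left hξ0 hA₁pos.le)
    have hA₁N : A₁ * N ≤ N := by
      have h := mul_le_mul_of_nonneg_right hA₁le1 hNpos.le
      linarith only [h]
    have hy0 := abs_le.mp hm₀y
    have h1 := abs_le.mp hFb
    have hψ0eq : ψ 0 = (F (ξf 0) - F ξbar)
        - (yl0 - (F ξbar - Zy - (δ + N + A₁*N))) + (δ + N + A₁*N) := by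
      rw [hψdef]
      simp only [Nat.cast_zero]
      ring
    constructor
    · linarith only [hψ0eq, h1.1, hy0.2]
    · linarith only [hψ0eq, h1.2, hy0.1, hA₁N]
  have hstep : ∀ j : ℕ, j < J → ψ (j+1) ≤ ψ j - ηa/2 ∧ ψ j - (3/2)*ηa ≤ ψ (j+1) := by
    intro j hj
    have hdiffeq : ξf (j+1) - ξf j = σ * xu := by
      rw [hξfdef]
      simp only
      push_cast
      ring
    have habs1 : |ξf (j+1) - ξf j| = Xu := by
      rw [hdiffeq, abs_mul, hσabs, one_mul, hXudef]
    have hF := hFlip (ξf j) (hξK j hj.le) (ξf (j+1)) (hξK (j+1) hj)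
    rw [habs1] at hF
    have hXuη : A₁ * Xu ≤ ηa/2 := by
      have h1 : A₁ * Xu ≤ A₁ * (Xu + 1) := by linarith only [hA₁pos]
      linarith only [h1, hA₁η]
    have hψd : ψ (j+1) - ψ j = (F (ξf (j+1)) - F (ξf j)) - ηa := by
      rw [hψdef]
      simp only
      push_cast
      ring
    have h2 := abs_le.mp hF
    constructor
    · linarith only [hψd, h2.2, hXuη]
    · linarith only [hψd, h2.1, hXuη]
  have hdec : ∀ j : ℕ, j ≤ J → ψ j ≤ ψ 0 - (j:ℝ) * (ηa/2) := by
    intro j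
    induction j with
    | zero => intro _; simp
    | succ n ih =>
      intro hn
      have h1 := ih (Nat.le_of_succ_le hn)
      have h2 := (hstep n (Nat.lt_of_succ_le hn)).1
      push_cast
      push_cast at h1
      linarith only [h1, h2]
  have hψJle : ψ J ≤ δ := by
    have h1 := hdec J le_rfl
    have h2 := hψ0l.2
    linarith only [h1, h2, hJη, hδpos]
  have hex : ∃ j : ℕ, ψ j ≤ δ := ⟨J, hψJle⟩
  set jstar := Nat.find hex with hjstardef
  have hjs_spec : ψ jstar ≤ δ := Nat.find_spec hex
  have hjs_le : jstar ≤ J := Nat.find_min' hex hψJle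
  have hjs_lb : -δ ≤ ψ jstar := by
    rcases Nat.eq_zero_or_pos jstar with h0 | hpos'
    · rw [h0]
      linarith only [hψ0l.1, hδpos]
    · obtain ⟨n, hn⟩ : ∃ n, jstar = n + 1 := ⟨jstar - 1, by omega⟩
      have hnot : ¬ ψ n ≤ δ := Nat.find_min hex (by omega)
      push_neg at hnot
      have hnJ : n < J := by omega
      have h2 := (hstep n hnJ).2
      have h3 : ψ jstar = ψ (n+1) := by rw [hn]
      linarith only [hnot, h2, hηle, hδpos, h3]
  -- the lattice translate
  set mι : ℤ := m₀ + (jstar:ℤ) * mu with hmιdef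
  set kι : ℤ := k₀ + (jstar:ℤ) * ku with hkιdef
  have hxleq : dot2 (((mι:ℤ):ℝ), ((kι:ℤ):ℝ)) w = xl0 + (jstar:ℝ) * xu := by
    rw [hmιdef, hkιdef, hxl0def, hxudef]
    simp only [dot2]
    push_cast
    ring
  have hyleq : cross2 w (((mι:ℤ):ℝ), ((kι:ℤ):ℝ)) = yl0 + (jstar:ℝ) * ηa := by
    rw [hmιdef, hkιdef, hyl0def, hηdef]
    simp only [cross2]
    push_cast
    ring
  set xl : ℝ := xl0 + (jstar:ℝ) * xu with hxldef
  set yl : ℝ := yl0 + (jstar:ℝ) * ηa with hyldef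
  clear_value xl yl
  have hξstareq : ξf jstar = σ * (Zx + xl) := by
    rw [hxldef, hξfdef]
    simp only
    ring
  have hψstareq : ψ jstar = F (ξf jstar) - (Zy + yl) := by
    rw [hyldef, hψdef]
    simp only
    ring
  set ζ : ℝ → ℝ := fun t => σ * (dot2 (β t) w + xl) with hζdef
  clear_value ζ
  have hζtm : ζ tm = ξf jstar := by
    rw [hζdef]
    simp only
    rw [hξstareq, hZxdef]
  have hβmono' : MonotoneOn (fun t => dot2 (β t) pβ) (Set.Icc c d) := hβmono.monotoneOn
  have hYbound : ∀ t ∈ Set.Icc tminus tplus, |dot2 (β t) pβ - mid| ≤ ρ := by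
    intro t ht
    have h1 : dot2 (β tminus) pβ ≤ dot2 (β t) pβ :=
      hβmono' htminus' (hsubtt ht) ht.1
    have h2 : dot2 (β t) pβ ≤ dot2 (β tplus) pβ :=
      hβmono' (hsubtt ht) htplus' ht.2
    rw [abs_le]
    exact ⟨by linarith only [h1, htminuseq], by linarith only [h2, htpluseq]⟩
  have hA₀inv : (0:ℝ) ≤ 1/A₀ := by positivity
  have hxβbound : ∀ t ∈ Set.Icc tminus tplus, |dot2 (β t) w - Zx| ≤ ρ/A₀ := by
    intro t ht
    have htmem := hsubtt ht
    have h3 := hYbound t ht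
    have h4 := abs_le.mp h3
    have h6 : (1/A₀) * ρ = ρ/A₀ := by ring
    rcases le_total t tm with hle | hle
    · have h := hβlip t htmem tm htm hle
      rw [hcrossqβ, hcrossqβ] at h
      have h2 := abs_le.mp h
      have h5 : (1/A₀) * (dot2 (β tm) pβ - dot2 (β t) pβ) ≤ (1/A₀) * ρ :=
        mul_le_mul_of_nonneg_left (by linarith only [h4.1, htmeq]) hA₀inv
      rw [abs_le]
      constructor
      · linarith only [h2.2, h5, h6, hZxdef]
      · linarith only [h2.1, h5, h6, hZxdef]
    · have h := hβlip tm htm t htmem hle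
      rw [hcrossqβ, hcrossqβ] at h
      have h2 := abs_le.mp h
      have h5 : (1/A₀) * (dot2 (β t) pβ - dot2 (β tm) pβ) ≤ (1/A₀) * ρ :=
        mul_le_mul_of_nonneg_left (by linarith only [h4.2, htmeq]) hA₀inv
      rw [abs_le]
      constructor
      · linarith only [h2.1, h5, h6, hZxdef]
      · linarith only [h2.2, h5, h6, hZxdef]
  have hζmem : ∀ t ∈ Set.Icc tminus tplus,
      ζ t ∈ Set.Icc Xα Xω ∧ |ζ t - ξf jstar| ≤ ρ/A₀ := by
    intro t ht
    have heq2 : ζ t - ξf jstar = σ * (dot2 (β t) w - Zx) := by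
      rw [hξstareq, hζdef]
      simp only
      ring
    have habs2 : |ζ t - ξf jstar| ≤ ρ/A₀ := by
      rw [heq2, abs_mul, hσabs, one_mul]
      exact hxβbound t ht
    have hmemj := hξmem jstar hjs_le
    have hd := abs_le.mp habs2
    exact ⟨⟨by linarith only [hd.1, hmemj.1, hΔmdef],
      by linarith only [hd.2, hmemj.2, hΔmdef]⟩, habs2⟩
  set ω : ℝ → ℝ := fun t => F (ζ t) - cross2 w (β t) - yl with hωdef
  clear_value ω
  have hβcsub : ContinuousOn β (Set.Icc tminus tplus) := hβc.mono hsubtt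
  have hζcont : ContinuousOn ζ (Set.Icc tminus tplus) := by
    rw [hζdef]
    simp only [dot2]
    apply ContinuousOn.mul continuousOn_const
    exact ((hβcsub.fst.mul continuousOn_const).add
      (hβcsub.snd.mul continuousOn_const)).add continuousOn_const
  have hωcont : ContinuousOn ω (Set.Icc tminus tplus) := by
    rw [hωdef]
    simp only [cross2]
    exact ((hFcont.comp_continuousOn hζcont).sub
      ((continuousOn_const.mul hβcsub.snd).sub
        (continuousOn_const.mul hβcsub.fst))).sub continuousOn_const
  have htm_mem : tm ∈ Set.Icc tminus tplus := ⟨htminus.2, htplus.1⟩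
  have hωtm : |ω tm| ≤ δ := by
    have h1 : ω tm = ψ jstar := by
      rw [hωdef]
      simp only
      rw [hζtm, hψstareq, hZydef]
      ring
    rw [h1, abs_le]
    exact ⟨hjs_lb, hjs_spec⟩
  have hcrossτ : ∀ t : ℝ, cross2 w (β t) = τ * dot2 (β t) pβ := by
    intro t
    have h := hdotpβ (β t)
    calc cross2 w (β t) = τ * τ * cross2 w (β t) := by rw [hτsq]; ring
      _ = τ * dot2 (β t) pβ := by rw [h]; ring
  have hFband : ∀ t ∈ Set.Icc tminus tplus, |F (ζ t) - F (ξf jstar)| ≤ ρ/4 := by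
    intro t ht
    have h1 := hFlip (ξf jstar) (hξK jstar hjs_le) (ζ t) ((hζmem t ht).1)
    have h2 := (hζmem t ht).2
    have h3 : A₁ * |ζ t - ξf jstar| ≤ (A₀/4) * (ρ/A₀) :=
      mul_le_mul hA₁leA₀4 h2 (abs_nonneg _) (by linarith only [hA₀pos])
    have h4 : (A₀/4) * (ρ/A₀) = ρ/4 := by
      field_simp
    linarith only [h1, h3, h4]
  have hωplus : ω tplus = ω tm + (F (ζ tplus) - F (ξf jstar)) - τ*ρ := by
    rw [hωdef]
    simp only
    rw [hcrossτ tplus, hcrossτ tm, htpluseq, htmeq, hζtm]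
    ring
  have hωminus : ω tminus = ω tm + (F (ζ tminus) - F (ξf jstar)) + τ*ρ := by
    rw [hωdef]
    simp only
    rw [hcrossτ tminus, hcrossτ tm, htminuseq, htmeq, hζtm]
    ring
  have habs_tp := abs_le.mp (hFband tplus (Set.right_mem_Icc.mpr htmtp))
  have habs_tm := abs_le.mp (hFband tminus (Set.left_mem_Icc.mpr htmtp))
  have hωtm' := abs_le.mp hωtm
  obtain ⟨that, hthat, hωzero⟩ : ∃ t ∈ Set.Icc tminus tplus, ω t = 0 := by
    rcases hτ1 with hτ | hτ
    · rw [hτ] at hωplus hωminus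
      have hp1 : ω tplus ≤ -(ρ/2) := by
        linarith only [hωplus, hωtm'.2, habs_tp.2, hδdef, hρpos]
      have hp2 : ρ/2 ≤ ω tminus := by
        linarith only [hωminus, hωtm'.1, habs_tm.1, hδdef, hρpos]
      have h0 : (0:ℝ) ∈ Set.Icc (ω tplus) (ω tminus) :=
        ⟨by linarith only [hp1, hρpos], by linarith only [hp2, hρpos]⟩
      obtain ⟨t0, ht0, h⟩ := intermediate_value_Icc' htmtp hωcont h0
      exact ⟨t0, ht0, h⟩
    · rw [hτ] at hωplus hωminus
      have hp1 : ρ/2 ≤ ω tplus := by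
        linarith only [hωplus, hωtm'.1, habs_tp.1, hδdef, hρpos]
      have hp2 : ω tminus ≤ -(ρ/2) := by
        linarith only [hωminus, hωtm'.2, habs_tm.2, hδdef, hρpos]
      have h0 : (0:ℝ) ∈ Set.Icc (ω tminus) (ω tplus) :=
        ⟨by linarith only [hp2, hρpos], by linarith only [hp1, hρpos]⟩
      obtain ⟨t0, ht0, h⟩ := intermediate_value_Icc htmtp hωcont h0
      exact ⟨t0, ht0, h⟩
  obtain ⟨shat, hshat, hXeq, hFeq⟩ := hFprop (ζ that) ((hζmem that hthat).1)
  refine ⟨shat, hshat, that, hsubtt hthat, ?_⟩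
  have hXeq' : dot2 (γ shat) p = ζ that := hXeq
  have hxeq : dot2 (γ shat) w = dot2 (β that) w + xl := by
    have h1 : σ * dot2 (γ shat) w = σ * (dot2 (β that) w + xl) := by
      rw [← hdotp, hXeq', hζdef]
    exact mul_left_cancel₀ hσne h1
  have hyeq : cross2 w (γ shat) = cross2 w (β that) + yl := by
    have h2 : F (ζ that) - cross2 w (β that) - yl = 0 := by
      have := hωzero
      rw [hωdef] at this
      exact this
    have h3 : F (ζ that) = cross2 w (γ shat) := hFeq
    linarith only [h2, h3]
  have hfinal : γ shat = β that + (((mι:ℤ):ℝ), ((kι:ℤ):ℝ)) := by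
    apply eq_of_coords hw
    · rw [dot2_add_left, hxleq, hxeq]
    · rw [cross2_add_right, hyleq, hyeq]
  rw [hfinal]
  exact pT_add_int (β that) mι kι

end
end

section
/- Let λ, μ ∈ ℝ with |λ| > 1 > |μ| and |λ| ≥ 2, and let ψ : ℝ → ℝ be a C¹ function with M := sup|ψ'| < ∞. Given constants c with 0 < c < |λ|, a > 0, and λ' with 1 < λ' < |λ|, there exist a₀ ∈ (0,a) and δ₀ > 0 such that for every C¹ function φ : ℝ → ℝ with sup|φ| ≤ δ₀ and |μ − ψ(x)φ'(y)| ≤ c for all x,y ∈ ℝ, the C¹ map F : ℝ² → ℝ² defined by F(x,y) = (λx, μy − ψ(x)φ(y)) satisfies: (i) DF_p maps cl(C^u_{a₀}) ∖ {(0,0)} into C^u_{a₀} for every p ∈ ℝ²; (ii) |DF_p(v)| ≥ λ'|v| for every v ∈ C^u_{a₀} and every p; (iii) for every C¹ curve γ with γ'(t) ∈ C^u_{a₀} for all t, diam(F∘γ) ≥ λ'·diam(γ). -/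
noncomputable section

/-! ### Auxiliary material -/

namespace UCaux

def e0 : E2 := EuclideanSpace.single 0 (1:ℝ)
def e1 : E2 := EuclideanSpace.single 1 (1:ℝ)

def pr0 : E2 →L[ℝ] ℝ := EuclideanSpace.proj (0 : Fin 2)
def pr1 : E2 →L[ℝ] ℝ := EuclideanSpace.proj (1 : Fin 2)

/-- The candidate total derivative of `Fmap` at `p`. -/
def Lmap (lam mu : ℝ) (ψ φ : ℝ → ℝ) (p : E2) : E2 →L[ℝ] E2 :=
  ((lam • pr0).smulRight e0) +
  ((mu • pr1 - (ψ (p 0) • (deriv φ (p 1) • pr1) + φ (p 1) • (deriv ψ (p 0) • pr0))).smulRight e1)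

lemma Lmap_apply0 (lam mu : ℝ) (ψ φ : ℝ → ℝ) (p w : E2) :
    (Lmap lam mu ψ φ p w) 0 = lam * w 0 := by
  simp [Lmap, pr0, pr1, e0, e1, EuclideanSpace.single_apply]

lemma Lmap_apply1 (lam mu : ℝ) (ψ φ : ℝ → ℝ) (p w : E2) :
    (Lmap lam mu ψ φ p w) 1 =
      (mu - ψ (p 0) * deriv φ (p 1)) * w 1 - deriv ψ (p 0) * φ (p 1) * w 0 := by
  simp [Lmap, pr0, pr1, e0, e1, EuclideanSpace.single_apply]
  ring

lemma hasFDerivAt_Fmap (lam mu : ℝ) {ψ φ : ℝ → ℝ} (hψ : ContDiff ℝ 1 ψ)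
    (hφ : ContDiff ℝ 1 φ) (p : E2) :
    HasFDerivAt (Fmap lam mu ψ φ) (Lmap lam mu ψ φ p) p := by
  have hrw : Fmap lam mu ψ φ = fun v : E2 =>
      (lam * v 0) • e0 + (mu * v 1 - ψ (v 0) * φ (v 1)) • e1 := by
    funext v
    ext i
    fin_cases i <;>
      simp [Fmap, e0, e1, EuclideanSpace.single_apply]
  rw [hrw]
  have h0 : HasFDerivAt (fun v : E2 => lam * v 0) (lam • pr0) p :=
    (pr0.hasFDerivAt (x := p)).const_mul lam
  have hmu : HasFDerivAt (fun v : E2 => mu * v 1) (mu • pr1) p :=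
    (pr1.hasFDerivAt (x := p)).const_mul mu
  have hψ' : HasFDerivAt (fun v : E2 => ψ (v 0)) (deriv ψ (p 0) • pr0) p :=
    ((hψ.differentiable one_ne_zero (p 0)).hasDerivAt).comp_hasFDerivAt p (pr0.hasFDerivAt)
  have hφ' : HasFDerivAt (fun v : E2 => φ (v 1)) (deriv φ (p 1) • pr1) p :=
    ((hφ.differentiable one_ne_zero (p 1)).hasDerivAt).comp_hasFDerivAt p (pr1.hasFDerivAt)
  exact (h0.smul_const e0).add ((hmu.sub (hψ'.mul hφ')).smul_const e1)

lemma norm_sq_E2 (v : E2) : ‖v‖^2 = (v 0)^2 + (v 1)^2 := by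
  rw [EuclideanSpace.norm_eq, Real.sq_sqrt (by positivity)]
  simp [Fin.sum_univ_two, Real.norm_eq_abs, sq_abs]

lemma abs_coord_le_norm (v : E2) (i : Fin 2) : |v i| ≤ ‖v‖ := by
  have h : ‖v‖^2 = (v 0)^2 + (v 1)^2 := norm_sq_E2 v
  have h0 : 0 ≤ ‖v‖ := norm_nonneg v
  fin_cases i
  · show |v 0| ≤ ‖v‖
    nlinarith [sq_abs (v 0), sq_abs (v 1), abs_nonneg (v 0), abs_nonneg (v 1)]
  · show |v 1| ≤ ‖v‖
    nlinarith [sq_abs (v 0), sq_abs (v 1), abs_nonneg (v 0), abs_nonneg (v 1)]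

/-- Monotonicity of the auxiliary combinations `ε·(a₀·γ₀) + σ·γ₁` along the curve. -/
lemma mono_combo {α β a₀ : ℝ} (hαβ : α < β) {γ : ℝ → E2}
    (hγ : ContDiffOn ℝ 1 γ (Set.Icc α β)) (ε σ : ℝ)
    (hnn : ∀ t ∈ Set.Icc α β,
      0 ≤ ε * (a₀ * (derivWithin γ (Set.Icc α β) t 0)) +
          σ * (derivWithin γ (Set.Icc α β) t 1)) :
    MonotoneOn (fun t => ε * (a₀ * γ t 0) + σ * (γ t 1)) (Set.Icc α β) := by
  set s := Set.Icc α β with hsdef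
  have hder : ∀ t ∈ s, HasDerivWithinAt γ (derivWithin γ s t) s t := fun t ht =>
    (hγ.differentiableOn one_ne_zero t ht).hasDerivWithinAt
  have hder0 : ∀ t ∈ s, HasDerivWithinAt (fun t => γ t 0) ((derivWithin γ s t) 0) s t :=
    fun t ht => (pr0.hasFDerivAt.comp_hasDerivWithinAt t (hder t ht))
  have hder1 : ∀ t ∈ s, HasDerivWithinAt (fun t => γ t 1) ((derivWithin γ s t) 1) s t :=
    fun t ht => (pr1.hasFDerivAt.comp_hasDerivWithinAt t (hder t ht))
  have hcont0 : ContinuousOn (fun t => γ t 0) s :=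
    pr0.continuous.comp_continuousOn hγ.continuousOn
  have hcont1 : ContinuousOn (fun t => γ t 1) s :=
    pr1.continuous.comp_continuousOn hγ.continuousOn
  apply monotoneOn_of_hasDerivWithinAt_nonneg (f' := fun t =>
      ε * (a₀ * (derivWithin γ s t 0)) + σ * (derivWithin γ s t 1)) (convex_Icc α β)
  · exact (continuousOn_const.mul (continuousOn_const.mul hcont0)).add
      (continuousOn_const.mul hcont1)
  · intro t ht
    have ht' : t ∈ s := interior_subset ht
    exact ((((hder0 t ht').const_mul a₀).const_mul ε).add
      ((hder1 t ht').const_mul σ)).mono interior_subset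
  · intro t ht
    exact hnn t (interior_subset ht)

end UCaux

open UCaux

set_option maxHeartbeats 2000000 in
/-- **Lemma 2.3.2 (existence of unstable cones, saddle case).** -/
theorem unstable_cones_saddle
    (lam mu : ℝ) (hlam : |lam| > 1) (hmu : 1 > |mu|) (hlam2 : |lam| ≥ 2)
    (ψ : ℝ → ℝ) (hψ : ContDiff ℝ 1 ψ) (M : ℝ) (hM : ∀ x, |deriv ψ x| ≤ M)
    (c : ℝ) (hc0 : 0 < c) (hc : c < |lam|)
    (a : ℝ) (ha : 0 < a) (lam' : ℝ) (hl1 : 1 < lam') (hl2 : lam' < |lam|) :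
    ∃ a₀ ∈ Set.Ioo (0:ℝ) a, ∃ δ₀ > (0:ℝ),
      ∀ φ : ℝ → ℝ, ContDiff ℝ 1 φ → (∀ y, |φ y| ≤ δ₀) →
        (∀ x y, |mu - ψ x * deriv φ y| ≤ c) →
        -- (i) invariance of the closed cone minus the origin
        (∀ p : E2, ∀ w ∈ closure (coneUE a₀) \ {0},
            fderiv ℝ (Fmap lam mu ψ φ) p w ∈ coneUE a₀) ∧
        -- (ii) uniform expansion of cone vectors
        (∀ p : E2, ∀ w ∈ coneUE a₀,
            lam' * ‖w‖ ≤ ‖fderiv ℝ (Fmap lam mu ψ φ) p w‖) ∧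
        -- (iii) expansion of the diameter of cone-tangent curves
        (∀ (γ : ℝ → E2) (α β : ℝ), α ≤ β → ContDiffOn ℝ 1 γ (Set.Icc α β) →
            (∀ t ∈ Set.Icc α β, derivWithin γ (Set.Icc α β) t ∈ coneUE a₀) →
            lam' * Metric.diam (γ '' Set.Icc α β) ≤
              Metric.diam (Fmap lam mu ψ φ '' (γ '' Set.Icc α β))) := by
  have hl0 : (0:ℝ) < lam' := lt_trans one_pos hl1
  have habs0 : (0:ℝ) ≤ |lam| := abs_nonneg lam
  have hlamsq : lam'^2 < lam^2 := by
    have h : lam'^2 < |lam|^2 := by nlinarith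
    simpa [sq_abs] using h
  set t0 : ℝ := Real.sqrt (lam^2 - lam'^2) / lam' with ht0def
  have ht0 : 0 < t0 := div_pos (Real.sqrt_pos.mpr (by linarith)) hl0
  set a₀ : ℝ := min (a/2) t0 with ha₀def
  have ha₀ : 0 < a₀ := lt_min (by linarith) ht0
  have ha₀a : a₀ < a := lt_of_le_of_lt (min_le_left _ _) (by linarith)
  have hkey : lam'^2 * (1 + a₀^2) ≤ lam^2 := by
    have h1 : a₀ ≤ t0 := min_le_right _ _
    have h2 : a₀^2 ≤ t0^2 := by nlinarith [ha₀.le]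
    have h3 : t0^2 * lam'^2 = lam^2 - lam'^2 := by
      rw [ht0def, div_pow, Real.sq_sqrt (by linarith)]
      field_simp
    nlinarith [sq_nonneg lam', sq_nonneg a₀]
  have hMnn : (0:ℝ) ≤ M := le_trans (abs_nonneg _) (hM 0)
  set δ₀ : ℝ := a₀ * (|lam| - c) / (2*(M+1)) with hδ₀def
  have hδ₀ : 0 < δ₀ := div_pos (mul_pos ha₀ (by linarith)) (by linarith)
  have hδe : δ₀ * (2*(M+1)) = a₀ * (|lam| - c) := by
    rw [hδ₀def]; field_simp
  have hkey2 : M * δ₀ + c * a₀ < a₀ * |lam| := by nlinarith [hδ₀, hMnn]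
  refine ⟨a₀, ⟨ha₀, ha₀a⟩, δ₀, hδ₀, ?_⟩
  intro φ hφ hφb hφc
  have hFD : ∀ p : E2, fderiv ℝ (Fmap lam mu ψ φ) p = Lmap lam mu ψ φ p := fun p =>
    (hasFDerivAt_Fmap lam mu hψ hφ p).fderiv
  -- closure of the cone
  have hclosure : closure (coneUE a₀) ⊆ {v : E2 | |v 1| ≤ a₀ * |v 0|} := by
    apply closure_minimal
    · intro v hv
      have hv' : |v 1| < a₀ * |v 0| := hv
      exact hv'.le
    · exact isClosed_le (pr1.continuous.abs) (continuous_const.mul pr0.continuous.abs)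
  refine ⟨?_, ?_, ?_⟩
  -- (i)
  · intro p w hw
    obtain ⟨hw1, hw2⟩ := hw
    have hcl : |w 1| ≤ a₀ * |w 0| := hclosure hw1
    have hw0 : w 0 ≠ 0 := by
      intro h0
      apply hw2
      have h1 : w 1 = 0 := by
        have h2 : |w 1| ≤ 0 := by simpa [h0] using hcl
        exact abs_eq_zero.mp (le_antisymm h2 (abs_nonneg _))
      show w ∈ ({0} : Set E2)
      have : w = 0 := by
        ext i
        fin_cases i
        · exact h0
        · exact h1
      simp [this]
    have hw0' : 0 < |w 0| := abs_pos.mpr hw0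
    rw [hFD p]
    show |(Lmap lam mu ψ φ p w) 1| < a₀ * |(Lmap lam mu ψ φ p w) 0|
    rw [Lmap_apply0, Lmap_apply1]
    have hb1 : |(mu - ψ (p 0) * deriv φ (p 1)) * w 1| ≤ c * (a₀ * |w 0|) := by
      rw [abs_mul]
      exact mul_le_mul (hφc (p 0) (p 1)) hcl (abs_nonneg _) hc0.le
    have hb2 : |deriv ψ (p 0) * φ (p 1) * w 0| ≤ M * δ₀ * |w 0| := by
      rw [abs_mul, abs_mul]
      have : |deriv ψ (p 0)| * |φ (p 1)| ≤ M * δ₀ :=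
        mul_le_mul (hM (p 0)) (hφb (p 1)) (abs_nonneg _) hMnn
      exact mul_le_mul_of_nonneg_right this (abs_nonneg _)
    have htri : |(mu - ψ (p 0) * deriv φ (p 1)) * w 1 - deriv ψ (p 0) * φ (p 1) * w 0| ≤
        c * (a₀ * |w 0|) + M * δ₀ * |w 0| :=
      le_trans (abs_sub ((mu - ψ (p 0) * deriv φ (p 1)) * w 1) (deriv ψ (p 0) * φ (p 1) * w 0)) (add_le_add hb1 hb2)
    have hR : a₀ * |lam * w 0| = a₀ * |lam| * |w 0| := by
      rw [abs_mul]; ring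
    rw [hR]
    nlinarith [hkey2, hw0']
  -- (ii)
  · intro p w hw
    have hcone : |w 1| < a₀ * |w 0| := hw
    rw [hFD p]
    have hns : ‖w‖^2 = (w 0)^2 + (w 1)^2 := norm_sq_E2 w
    have hsq : (lam' * ‖w‖)^2 ≤ (lam * w 0)^2 := by
      nlinarith [sq_abs (w 0), sq_abs (w 1), abs_nonneg (w 0), abs_nonneg (w 1),
        mul_self_le_mul_self (abs_nonneg (w 1)) hcone.le, hkey, sq_nonneg (w 0), ha₀.le,
        mul_pos hl0 hl0]
    have h1 : lam' * ‖w‖ ≤ |lam * w 0| := by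
      have h2 := Real.sqrt_le_sqrt hsq
      rwa [Real.sqrt_sq (by positivity), Real.sqrt_sq_eq_abs] at h2
    refine le_trans h1 ?_
    have := abs_coord_le_norm (Lmap lam mu ψ φ p w) 0
    rwa [Lmap_apply0] at this
  -- (iii)
  · intro γ α β hαβ hγ hγc
    rcases eq_or_lt_of_le hαβ with rfl | hαβ'
    · simp [Set.Icc_self, Set.image_singleton, Metric.diam_singleton]
    set s := Set.Icc α β with hsdef
    have hder : ∀ t ∈ s, HasDerivWithinAt γ (derivWithin γ s t) s t := fun t ht =>
      (hγ.differentiableOn one_ne_zero t ht).hasDerivWithinAt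
    have hus : UniqueDiffOn ℝ s := uniqueDiffOn_Icc hαβ'
    have hgc : ContinuousOn (derivWithin γ s) s := hγ.continuousOn_derivWithin hus le_rfl
    have hcone : ∀ t ∈ s, |derivWithin γ s t 1| < a₀ * |derivWithin γ s t 0| := hγc
    have hne : ∀ t ∈ s, derivWithin γ s t 0 ≠ 0 := by
      intro t ht h0
      have := hcone t ht
      rw [h0] at this
      simp at this
      exact absurd this (not_lt.mpr (abs_nonneg _))
    -- constant sign of the first component of the derivative
    have hsign : (∀ t ∈ s, 0 < derivWithin γ s t 0) ∨ (∀ t ∈ s, derivWithin γ s t 0 < 0) := by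
      by_contra hcon
      push_neg at hcon
      obtain ⟨⟨t1, ht1, ht1'⟩, ⟨t2, ht2, ht2'⟩⟩ := hcon
      have h1 : derivWithin γ s t1 0 ≤ 0 := ht1'
      have h2 : 0 ≤ derivWithin γ s t2 0 := ht2'
      have h1' : derivWithin γ s t1 0 < 0 := lt_of_le_of_ne h1 (hne t1 ht1)
      have h2' : 0 < derivWithin γ s t2 0 := lt_of_le_of_ne h2 (Ne.symm (hne t2 ht2))
      have hpc : IsPreconnected ((fun t => derivWithin γ s t 0) '' s) :=
        isPreconnected_Icc.image _ (pr0.continuous.comp_continuousOn hgc)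
      have h0mem : (0:ℝ) ∈ (fun t => derivWithin γ s t 0) '' s :=
        hpc.ordConnected.out (Set.mem_image_of_mem _ ht1) (Set.mem_image_of_mem _ ht2)
          ⟨h1'.le, h2'.le⟩
      obtain ⟨t', ht', he⟩ := h0mem
      exact hne t' ht' he
    -- the key Lipschitz-type estimate along the curve
    have hmain : ∀ u ∈ s, ∀ v ∈ s, u ≤ v → |γ v 1 - γ u 1| ≤ a₀ * |γ v 0 - γ u 0| := by
      intro u hu v hv huv
      rcases hsign with hpos | hneg
      · have hm1 := mono_combo hαβ' hγ 1 1 (fun t ht => by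
          have h1 := hcone t ht
          have h2 := hpos t ht
          rw [abs_of_pos h2] at h1
          rcases abs_cases (derivWithin γ s t 1) with ⟨e, e'⟩ | ⟨e, e'⟩ <;> rw [e] at h1 <;>
            nlinarith [mul_pos ha₀ h2])
        have hm2 := mono_combo hαβ' hγ 1 (-1) (fun t ht => by
          have h1 := hcone t ht
          have h2 := hpos t ht
          rw [abs_of_pos h2] at h1
          rcases abs_cases (derivWithin γ s t 1) with ⟨e, e'⟩ | ⟨e, e'⟩ <;> rw [e] at h1 <;>
            nlinarith [mul_pos ha₀ h2])
        have e1 := hm1 hu hv huv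
        have e2 := hm2 hu hv huv
        simp only at e1 e2
        have hs0 : 0 ≤ a₀ * (γ v 0 - γ u 0) := by nlinarith [e1, e2]
        have hd0 : 0 ≤ γ v 0 - γ u 0 := by nlinarith [hs0, ha₀]
        rw [abs_of_nonneg hd0]
        exact abs_le.mpr ⟨by nlinarith [e1], by nlinarith [e2]⟩
      · have hm1 := mono_combo hαβ' hγ (-1) 1 (fun t ht => by
          have h1 := hcone t ht
          have h2 := hneg t ht
          rw [abs_of_neg h2] at h1
          rcases abs_cases (derivWithin γ s t 1) with ⟨e, e'⟩ | ⟨e, e'⟩ <;> rw [e] at h1 <;>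
            nlinarith [mul_pos ha₀ (neg_pos.mpr h2)])
        have hm2 := mono_combo hαβ' hγ (-1) (-1) (fun t ht => by
          have h1 := hcone t ht
          have h2 := hneg t ht
          rw [abs_of_neg h2] at h1
          rcases abs_cases (derivWithin γ s t 1) with ⟨e, e'⟩ | ⟨e, e'⟩ <;> rw [e] at h1 <;>
            nlinarith [mul_pos ha₀ (neg_pos.mpr h2)])
        have e1 := hm1 hu hv huv
        have e2 := hm2 hu hv huv
        simp only at e1 e2
        have hs0 : a₀ * (γ v 0 - γ u 0) ≤ 0 := by nlinarith [e1, e2]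
        have hd0 : γ v 0 - γ u 0 ≤ 0 := by nlinarith [hs0, ha₀]
        rw [abs_of_nonpos hd0]
        have hrw : a₀ * -(γ v 0 - γ u 0) = -(a₀ * (γ v 0 - γ u 0)) := by ring
        rw [hrw]
        exact abs_le.mpr ⟨by nlinarith [e1], by nlinarith [e2]⟩
    have hclaim : ∀ u ∈ s, ∀ v ∈ s, |γ v 1 - γ u 1| ≤ a₀ * |γ v 0 - γ u 0| := by
      intro u hu v hv
      rcases le_total u v with h | h
      · exact hmain u hu v hv h
      · rw [abs_sub_comm (γ v 1), abs_sub_comm (γ v 0)]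
        exact hmain v hv u hu h
    -- distance expansion between any two points on the curve
    set F := Fmap lam mu ψ φ with hFdef
    have hdist : ∀ u ∈ s, ∀ v ∈ s,
        lam' * dist (γ u) (γ v) ≤ dist (F (γ u)) (F (γ v)) := by
      intro u hu v hv
      have hd1 : dist (γ u) (γ v) ^ 2 = (γ u 0 - γ v 0)^2 + (γ u 1 - γ v 1)^2 := by
        rw [dist_eq_norm, norm_sq_E2]
        simp
      have hcl : |γ u 1 - γ v 1| ≤ a₀ * |γ u 0 - γ v 0| := hclaim v hv u hu
      have hsq : (lam' * dist (γ u) (γ v))^2 ≤ (lam * (γ u 0 - γ v 0))^2 := by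
        nlinarith [sq_abs (γ u 0 - γ v 0), sq_abs (γ u 1 - γ v 1),
          abs_nonneg (γ u 0 - γ v 0), abs_nonneg (γ u 1 - γ v 1),
          mul_self_le_mul_self (abs_nonneg (γ u 1 - γ v 1)) hcl, hkey,
          sq_nonneg (γ u 0 - γ v 0), dist_nonneg (x := γ u) (y := γ v), mul_pos hl0 hl0]
      have h1 : lam' * dist (γ u) (γ v) ≤ |lam * (γ u 0 - γ v 0)| := by
        have h2 := Real.sqrt_le_sqrt hsq
        rwa [Real.sqrt_sq (by positivity), Real.sqrt_sq_eq_abs] at h2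
      refine le_trans h1 ?_
      have h3 := abs_coord_le_norm (F (γ u) - F (γ v)) 0
      have h4 : (F (γ u) - F (γ v)) 0 = lam * (γ u 0 - γ v 0) := by
        have : ∀ x : E2, F x 0 = lam * x 0 := fun x => by simp [hFdef, Fmap]
        simp [this]
        ring
      rw [h4] at h3
      rwa [dist_eq_norm]
    -- conclude via diameters
    have hA : IsCompact (γ '' s) := isCompact_Icc.image_of_continuousOn hγ.continuousOn
    have hFc : Continuous F :=
      continuous_iff_continuousAt.mpr fun p => (hasFDerivAt_Fmap lam mu hψ hφ p).continuousAt
    have hFA : Bornology.IsBounded (F '' (γ '' s)) := (hA.image hFc).isBounded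
    have hd : Metric.diam (γ '' s) ≤ Metric.diam (F '' (γ '' s)) / lam' := by
      apply Metric.diam_le_of_forall_dist_le (div_nonneg Metric.diam_nonneg hl0.le)
      rintro x ⟨u, hu, rfl⟩ y ⟨v, hv, rfl⟩
      rw [le_div_iff₀ hl0]
      calc dist (γ u) (γ v) * lam' = lam' * dist (γ u) (γ v) := mul_comm _ _
        _ ≤ dist (F (γ u)) (F (γ v)) := hdist u hu v hv
        _ ≤ Metric.diam (F '' (γ '' s)) :=
            Metric.dist_le_diam_of_mem hFA
              (Set.mem_image_of_mem _ (Set.mem_image_of_mem _ hu))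
              (Set.mem_image_of_mem _ (Set.mem_image_of_mem _ hv))
    calc lam' * Metric.diam (γ '' s) ≤ lam' * (Metric.diam (F '' (γ '' s)) / lam') :=
          mul_le_mul_of_nonneg_left hd hl0.le
      _ = Metric.diam (F '' (γ '' s)) := by field_simp

end
end
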